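/- arXiv:2506.22918 — 6 statements merged into one kernel-verified Lean document; each statement's English description precedes it below -/
import Mathlib

section
/- Let K be a symmetric positive definite n×n matrix, I a nonempty subset of indices, and V the matrix with orthonormal columns obtained by symmetric orthogonalization of the columns K_{:,I}, i.e. V = K_{:,I} ((K^2)_{I,I})^{-1/2}. Then the Nyström approximation satisfies K_{:,I} (K_{I,I})^{-1} K_{I,:} = V (V^T K^{-1} V)^{-1} V^T. -/
open Matrix

lemma aux_posDef_submatrix {n : ℕ} {K : Matrix (Fin n) (Fin n) ℝ} (hK : K.PosDef)
    (s : Finset (Fin n)) :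
    (K.submatrix (Subtype.val : s → Fin n) (Subtype.val : s → Fin n)).PosDef := by
  exact hK.submatrix Subtype.val_injective

/-- **Refactoring identity / Lemma `refactor`.**
Let `K` be symmetric positive definite, `s` a nonempty index subset, and
`V := K_{:,s} ((K²)_{s,s})^{-1/2}` the symmetric orthogonalization of the columns `K_{:,s}`.
Then the Nyström approximation satisfies
`K_{:,s} (K_{s,s})⁻¹ K_{s,:} = V (Vᵀ K⁻¹ V)⁻¹ Vᵀ`.
(The hypothesis `h2`, positive-definiteness of `(K²)_{s,s}`, is a consequence of `K` being
positive definite and is supplied to form the positive-definite square root.) -/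
theorem nystrom_refactor_identity {n : ℕ} (K : Matrix (Fin n) (Fin n) ℝ) (hK : K.PosDef)
    (s : Finset (Fin n)) (hs : s.Nonempty)
    (h2 : ((K * K).submatrix (Subtype.val : s → Fin n) (Subtype.val : s → Fin n)).PosDef) :
    letI V : Matrix (Fin n) s ℝ :=
      K.submatrix id (Subtype.val : s → Fin n) * ((h2.posSemidef.1.eigenvectorUnitary : Matrix s s ℝ) *
        diagonal ((RCLike.ofReal : ℝ → ℝ) ∘ Real.sqrt ∘ h2.posSemidef.1.eigenvalues) *
        (star h2.posSemidef.1.eigenvectorUnitary : Matrix s s ℝ))⁻¹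
    K.submatrix id (Subtype.val : s → Fin n) *
        (K.submatrix (Subtype.val : s → Fin n) (Subtype.val : s → Fin n))⁻¹ *
        K.submatrix (Subtype.val : s → Fin n) id =
      V * (Vᵀ * K⁻¹ * V)⁻¹ * Vᵀ := by
  classical
  have hdetK : IsUnit K.det := hK.det_pos.ne'.isUnit
  have hB : (K.submatrix (Subtype.val : s → Fin n) Subtype.val).PosDef :=
    aux_posDef_submatrix hK s
  have hdetB : IsUnit (K.submatrix (Subtype.val : s → Fin n) Subtype.val).det :=
    hB.det_pos.ne'.isUnit
  set S : Matrix s s ℝ := (h2.posSemidef.1.eigenvectorUnitary : Matrix s s ℝ) *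
        diagonal ((RCLike.ofReal : ℝ → ℝ) ∘ Real.sqrt ∘ h2.posSemidef.1.eigenvalues) *
        (star h2.posSemidef.1.eigenvectorUnitary : Matrix s s ℝ) with hSdef
  set A : Matrix (Fin n) s ℝ := K.submatrix id (Subtype.val : s → Fin n) with hAdef
  set B : Matrix s s ℝ := K.submatrix (Subtype.val : s → Fin n) Subtype.val with hBdef
  have hSherm : S.IsHermitian := by
    rw [hSdef, IsHermitian, conjTranspose_mul, conjTranspose_mul, diagonal_conjTranspose,
      star_eq_conjTranspose, conjTranspose_conjTranspose, Matrix.mul_assoc]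
    simp
  have hSsymm : Sᵀ = S := by
    have := hSherm
    simpa [Matrix.IsHermitian, Matrix.conjTranspose_eq_transpose_of_trivial] using this
  have hKsymm : Kᵀ = K := by
    have := hK.1
    simpa [Matrix.IsHermitian, Matrix.conjTranspose_eq_transpose_of_trivial] using this
  have hSsq : S * S = (K * K).submatrix (Subtype.val : s → Fin n) Subtype.val := by
    conv_rhs => rw [h2.posSemidef.1.spectral_theorem, Unitary.conjStarAlgAut_apply]
    have hU : (star h2.posSemidef.1.eigenvectorUnitary : Matrix s s ℝ) *
        (h2.posSemidef.1.eigenvectorUnitary : Matrix s s ℝ) = 1 := Unitary.coe_star_mul_self _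
    have hD : diagonal ((RCLike.ofReal : ℝ → ℝ) ∘ Real.sqrt ∘ h2.posSemidef.1.eigenvalues) *
        diagonal ((RCLike.ofReal : ℝ → ℝ) ∘ Real.sqrt ∘ h2.posSemidef.1.eigenvalues) =
        diagonal ((RCLike.ofReal : ℝ → ℝ) ∘ h2.posSemidef.1.eigenvalues) := by
      rw [diagonal_mul_diagonal]
      congr 1; funext i
      simp [Real.mul_self_sqrt (h2.posSemidef.eigenvalues_nonneg i)]
    rw [hSdef]
    simp only [Matrix.mul_assoc]
    rw [← Matrix.mul_assoc (star _ : Matrix s s ℝ) (_ : Matrix s s ℝ), hU, Matrix.one_mul,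
      ← Matrix.mul_assoc (diagonal _), hD]
  have hdetS : IsUnit S.det := by
    have hmul : S.det * S.det = ((K * K).submatrix (Subtype.val : s → Fin n) Subtype.val).det := by
      rw [← det_mul, hSsq]
    have hne : S.det ≠ 0 := by
      intro h
      rw [h, mul_zero] at hmul
      exact h2.det_pos.ne' hmul.symm
    exact hne.isUnit
  -- projection matrix
  set P : Matrix (Fin n) s ℝ :=
    (1 : Matrix (Fin n) (Fin n) ℝ).submatrix (Equiv.refl (Fin n)) (Subtype.val : s → Fin n)
    with hPdef
  have hA : K * P = A := by
    rw [hPdef, mul_submatrix_one]; rfl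
  have hAT : Pᵀ * K = K.submatrix (Subtype.val : s → Fin n) id := by
    rw [hPdef, transpose_submatrix, transpose_one, one_submatrix_mul]; rfl
  have hATA : Aᵀ = K.submatrix (Subtype.val : s → Fin n) id := by
    rw [hAdef, transpose_submatrix, hKsymm]
  have key2 : K.submatrix (Subtype.val : s → Fin n) id * K⁻¹ * A = B := by
    rw [← hA, ← hAT]
    have h1 : Pᵀ * K * K⁻¹ = Pᵀ := by
      rw [Matrix.mul_assoc, Matrix.mul_nonsing_inv K hdetK, Matrix.mul_one]
    rw [h1, ← Matrix.mul_assoc, hAT, hPdef, mul_submatrix_one]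
    rfl
  have hVT : (A * S⁻¹)ᵀ = S⁻¹ * K.submatrix (Subtype.val : s → Fin n) id := by
    rw [transpose_mul, transpose_nonsing_inv, hSsymm, hATA]
  have hmid : (A * S⁻¹)ᵀ * K⁻¹ * (A * S⁻¹) = S⁻¹ * B * S⁻¹ := by
    rw [hVT]
    calc S⁻¹ * K.submatrix (Subtype.val : s → Fin n) id * K⁻¹ * (A * S⁻¹)
        = S⁻¹ * (K.submatrix (Subtype.val : s → Fin n) id * K⁻¹ * A) * S⁻¹ := by
          simp only [Matrix.mul_assoc]
      _ = S⁻¹ * B * S⁻¹ := by rw [key2]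
  rw [hmid, Matrix.mul_inv_rev (S⁻¹ * B) S⁻¹, Matrix.mul_inv_rev S⁻¹ B,
    Matrix.nonsing_inv_nonsing_inv S hdetS, hVT]
  calc A * B⁻¹ * K.submatrix (Subtype.val : s → Fin n) id
      = A * (S⁻¹ * (S * (B⁻¹ * (S * (S⁻¹ * K.submatrix (Subtype.val : s → Fin n) id))))) := by
        rw [Matrix.mul_nonsing_inv_cancel_left S _ hdetS,
          Matrix.nonsing_inv_mul_cancel_left S _ hdetS, Matrix.mul_assoc]
    _ = A * S⁻¹ * (S * (B⁻¹ * S)) * (S⁻¹ * K.submatrix (Subtype.val : s → Fin n) id) := by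
        simp only [Matrix.mul_assoc]
end

section
/- For a positive definite n×n matrix L with K := L^{-1} and a nonempty index subset I, the time integral of the compressed dynamics equals the Nyström approximation: ∫_0^∞ V e^{-(V^T L V) t} V^T dt = K_{:,I} (K_{I,I})^{-1} K_{I,:}, where V = orth(K_{:,I}). -/
open Matrix MeasureTheory

attribute [local instance] Matrix.normedAddCommGroup Matrix.normedSpace

/-- The square root of a positive semidefinite matrix, as `Matrix.PosSemidef.sqrt` was defined
in Mathlib of December 2024 (removed since). -/
noncomputable def Matrix.PosSemidef.sqrt {m 𝕜 : Type*} [Fintype m] [DecidableEq m] [RCLike 𝕜]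
    [PartialOrder 𝕜] {A : Matrix m m 𝕜} (hA : A.PosSemidef) : Matrix m m 𝕜 :=
  (hA.1.eigenvectorUnitary : Matrix m m 𝕜) * diagonal (((↑) : ℝ → 𝕜) ∘ (√·) ∘ hA.1.eigenvalues) *
    (star hA.1.eigenvectorUnitary : Matrix m m 𝕜)

lemma my_sqrt_mul_self {m : Type*} [Fintype m] [DecidableEq m] {A : Matrix m m ℝ}
    (hA : A.PosSemidef) : hA.sqrt * hA.sqrt = A := by
  have hsU : (star hA.1.eigenvectorUnitary : Matrix m m ℝ) * (hA.1.eigenvectorUnitary : Matrix m m ℝ) = 1 :=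
    Matrix.mem_unitaryGroup_iff'.mp hA.1.eigenvectorUnitary.2
  simp only [Matrix.PosSemidef.sqrt]
  rw [show ∀ (U D sU : Matrix m m ℝ), U * D * sU * (U * D * sU) = U * (D * (sU * U) * D) * sU by
    intro U D sU; simp only [Matrix.mul_assoc], hsU, Matrix.mul_one, Matrix.diagonal_mul_diagonal]
  conv_rhs => rw [hA.1.spectral_theorem]
  rw [Unitary.conjStarAlgAut_apply]
  congr 2
  congr 1
  funext i
  simp [Real.mul_self_sqrt (hA.eigenvalues_nonneg i)]

lemma my_sqrt_isHermitian {m : Type*} [Fintype m] [DecidableEq m] {A : Matrix m m ℝ}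
    (hA : A.PosSemidef) : hA.sqrt.IsHermitian := by
  simp [Matrix.IsHermitian, Matrix.PosSemidef.sqrt, Matrix.conjTranspose_mul, Matrix.mul_assoc,
    Matrix.star_eq_conjTranspose]

lemma my_integral_exp_neg_mul {b : ℝ} (hb : 0 < b) :
    ∫ t in Set.Ioi (0 : ℝ), Real.exp (-t * b) = b⁻¹ := by
  have hderiv : ∀ x ∈ Set.Ici (0:ℝ), HasDerivAt (fun t : ℝ => -b⁻¹ * Real.exp (-t * b))
      (Real.exp (-x * b)) x := by
    intro x _
    have h1 : HasDerivAt (fun t : ℝ => -t * b) (-b) x := by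
      simpa using ((hasDerivAt_id x).neg.mul_const b)
    have h2 := h1.exp.const_mul (-b⁻¹)
    convert h2 using 1
    · rfl
    · rfl
    · field_simp
  have hint : IntegrableOn (fun t : ℝ => Real.exp (-t * b)) (Set.Ioi 0) := by
    simpa [mul_comm] using exp_neg_integrableOn_Ioi 0 hb
  have h1 : Filter.Tendsto (fun t : ℝ => t * b) Filter.atTop Filter.atTop :=
    Filter.Tendsto.atTop_mul_const hb Filter.tendsto_id
  have h2 : Filter.Tendsto (fun t : ℝ => Real.exp (-t * b)) Filter.atTop (nhds 0) := by
    have h3 := Real.tendsto_exp_atBot.comp (Filter.tendsto_neg_atTop_atBot.comp h1)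
    simpa [Function.comp_def, neg_mul] using h3
  have htend : Filter.Tendsto (fun t : ℝ => -b⁻¹ * Real.exp (-t * b)) Filter.atTop (nhds 0) := by
    simpa using h2.const_mul (-b⁻¹)
  rw [integral_Ioi_of_hasDerivAt_of_tendsto' hderiv hint htend]
  simp

lemma my_integral_conj_exp {p q r : Type*} [Fintype p] [Fintype q] [DecidableEq q] [Fintype r]
    {A : Matrix q q ℝ} (hA : A.PosDef) (P : Matrix p q ℝ) (Q : Matrix q r ℝ) :
    ∫ t in Set.Ioi (0 : ℝ), P * NormedSpace.exp ((-t) • A) * Q = P * A⁻¹ * Q := by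
  classical
  set U : Matrix q q ℝ := (hA.isHermitian.eigenvectorUnitary : Matrix q q ℝ) with hUdef
  set μ : q → ℝ := hA.isHermitian.eigenvalues with hμdef
  have hμ : ∀ i, 0 < μ i := fun i => hA.eigenvalues_pos i
  have hmem := (Matrix.IsHermitian.eigenvectorUnitary hA.isHermitian).2
  have hsU : star U * U = 1 := Matrix.mem_unitaryGroup_iff'.mp hmem
  have hUs : U * star U = 1 := Matrix.mem_unitaryGroup_iff.mp hmem
  have hUunit : IsUnit U := ⟨⟨U, star U, hUs, hsU⟩, rfl⟩
  have hUinv : U⁻¹ = star U := Matrix.inv_eq_left_inv hsU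
  have hspec : A = U * Matrix.diagonal μ * star U := by
    have := hA.isHermitian.spectral_theorem
    simpa [RCLike.ofReal_real_eq_id, Function.comp] using this
  have pull : ∀ w : q → ℝ, P * (U * Matrix.diagonal w * star U) * Q
      = ∑ i, w i • (P * (U * Matrix.single i i 1 * star U) * Q) := by
    intro w
    have hd : Matrix.diagonal w = ∑ i, w i • Matrix.single i i (1:ℝ) := by
      ext a b
      simp only [Matrix.sum_apply, Matrix.smul_apply, Matrix.single, Matrix.of_apply,
        smul_eq_mul, mul_ite, mul_one, mul_zero, Matrix.diagonal_apply]
      rw [eq_comm]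
      simp only [ite_and]
      rw [Finset.sum_ite_eq' Finset.univ a (fun x => if x = b then w x else 0)]
      by_cases h : a = b <;> simp [h, eq_comm]
    rw [hd]
    simp only [Matrix.mul_sum, Matrix.sum_mul, Matrix.mul_smul, Matrix.smul_mul]
  have hexp : ∀ t : ℝ, NormedSpace.exp ((-t) • A)
      = U * Matrix.diagonal (fun i => Real.exp (-t * μ i)) * star U := by
    intro t
    calc NormedSpace.exp ((-t) • A)
        = NormedSpace.exp (U * ((-t) • Matrix.diagonal μ) * U⁻¹) := by
          rw [hUinv, hspec]
          congr 1
          simp [Matrix.smul_mul, Matrix.mul_smul]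
      _ = U * NormedSpace.exp ((-t) • Matrix.diagonal μ) * U⁻¹ :=
          Matrix.exp_conj U _ hUunit
      _ = U * Matrix.diagonal (fun i => Real.exp (-t * μ i)) * star U := by
          rw [hUinv]
          congr 2
          rw [← Matrix.diagonal_smul, Matrix.exp_diagonal, Pi.exp_def]
          congr 1
          funext i
          simp [← Real.exp_eq_exp_ℝ, smul_eq_mul]
  have hinvA : A⁻¹ = U * Matrix.diagonal (fun i => (μ i)⁻¹) * star U := by
    apply Matrix.inv_eq_right_inv
    have hDD : Matrix.diagonal μ * Matrix.diagonal (fun i => (μ i)⁻¹) = 1 := by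
      rw [Matrix.diagonal_mul_diagonal]
      convert Matrix.diagonal_one using 2
      funext i
      exact mul_inv_cancel₀ (hμ i).ne'
    calc A * (U * Matrix.diagonal (fun i => (μ i)⁻¹) * star U)
        = U * (Matrix.diagonal μ * ((star U * U) * Matrix.diagonal (fun i => (μ i)⁻¹))) * star U := by
          rw [hspec]; simp only [Matrix.mul_assoc]
      _ = 1 := by rw [hsU, Matrix.one_mul, hDD, Matrix.mul_one, hUs]
  have hint : ∀ i : q, IntegrableOn (fun t : ℝ => Real.exp (-t * μ i)) (Set.Ioi 0) := fun i => by
    simpa [mul_comm] using exp_neg_integrableOn_Ioi 0 (hμ i)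
  calc ∫ t in Set.Ioi (0:ℝ), P * NormedSpace.exp ((-t) • A) * Q
      = ∫ t in Set.Ioi (0:ℝ), ∑ i, Real.exp (-t * μ i) •
          (P * (U * Matrix.single i i 1 * star U) * Q) := by
        simp only [hexp, pull]
    _ = ∑ i, ∫ t in Set.Ioi (0:ℝ), Real.exp (-t * μ i) •
          (P * (U * Matrix.single i i 1 * star U) * Q) := by
        apply integral_finset_sum
        intro i _
        exact (hint i).smul_const _
    _ = ∑ i, (μ i)⁻¹ • (P * (U * Matrix.single i i 1 * star U) * Q) := by
        refine Finset.sum_congr rfl fun i _ => ?_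
        rw [integral_smul_const, my_integral_exp_neg_mul (hμ i)]
    _ = P * (U * Matrix.diagonal (fun i => (μ i)⁻¹) * star U) * Q := (pull _).symm
    _ = P * A⁻¹ * Q := by rw [hinvA]

lemma my_posDef_conj {m' n' : Type*} [Fintype m'] [Fintype n'] {M : Matrix n' n' ℝ}
    (hM : M.PosDef) (B : Matrix n' m' ℝ) (hB : Function.Injective B.mulVec) :
    (Bᴴ * M * B).PosDef := by
  exact hM.conjTranspose_mul_mul_same hB

/-- For positive definite `L` with `K := L⁻¹` and a nonempty index subset `s`,
the time integral of the compressed dynamics recovers the Nyström approximation: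
`∫_0^∞ V e^{-(Vᵀ L V) t} Vᵀ dt = K_{:,s} (K_{s,s})⁻¹ K_{s,:}`,
where `V = orth(K_{:,s}) = K_{:,s} ((K²)_{s,s})^{-1/2}` has orthonormal columns spanning the
column space of `K_{:,s}`.  (The hypothesis `h2`, positive definiteness of `(K²)_{s,s}`, is a
consequence of positive definiteness of `K` and is supplied to form the square root.) -/
theorem integral_compressed_dynamics_eq_nystrom {n : ℕ} (L : Matrix (Fin n) (Fin n) ℝ)
    (hL : L.PosDef) (s : Finset (Fin n)) (hs : s.Nonempty)
    (K : Matrix (Fin n) (Fin n) ℝ) (hK : K = L⁻¹)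
    (h2 : ((K * K).submatrix (Subtype.val : s → Fin n) (Subtype.val : s → Fin n)).PosDef) :
    letI V : Matrix (Fin n) s ℝ :=
      K.submatrix id (Subtype.val : s → Fin n) * (h2.posSemidef.sqrt)⁻¹
    ∫ t in Set.Ioi (0 : ℝ), V * NormedSpace.exp ((-t) • (Vᵀ * L * V)) * Vᵀ =
      K.submatrix id (Subtype.val : s → Fin n) *
        (K.submatrix (Subtype.val : s → Fin n) (Subtype.val : s → Fin n))⁻¹ *
        K.submatrix (Subtype.val : s → Fin n) id := by
  classical
  set ι : s → Fin n := Subtype.val with hι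
  set C : Matrix (Fin n) s ℝ := K.submatrix id ι with hC
  set C' : Matrix s (Fin n) ℝ := K.submatrix ι id with hC'
  set S : Matrix s s ℝ := h2.posSemidef.sqrt with hS
  set V : Matrix (Fin n) s ℝ := C * S⁻¹ with hV
  have hKpd : K.PosDef := hK ▸ hL.inv
  have hKT : Kᵀ = K :=
    (Matrix.conjTranspose_eq_transpose_of_trivial K).symm.trans hKpd.isHermitian.eq
  have hdetL : IsUnit L.det := (Matrix.isUnit_iff_isUnit_det L).mp hL.isUnit
  have hKL : K * L = 1 := by rw [hK]; exact Matrix.nonsing_inv_mul L hdetL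
  have e1 : C' * L = (1 : Matrix (Fin n) (Fin n) ℝ).submatrix ι id := by
    rw [hC', show (1 : Matrix (Fin n) (Fin n) ℝ) = K * L from hKL.symm,
      Matrix.submatrix_mul K L ι id id Function.bijective_id, Matrix.submatrix_id_id]
  have hCLC : C' * L * C = K.submatrix ι ι := by
    rw [e1, hC, ← Matrix.submatrix_mul (1 : Matrix (Fin n) (Fin n) ℝ) K ι id ι
      Function.bijective_id, Matrix.one_mul]
  have hCC : C' * C = (K * K).submatrix ι ι := by
    rw [hC, hC']; exact (Matrix.submatrix_mul K K ι id ι Function.bijective_id).symm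
  have hSS : S * S = (K * K).submatrix ι ι := my_sqrt_mul_self h2.posSemidef
  have hST : Sᵀ = S :=
    (Matrix.conjTranspose_eq_transpose_of_trivial S).symm.trans
      (my_sqrt_isHermitian h2.posSemidef).eq
  have hdetS : IsUnit S.det := by
    have h := h2.det_pos
    have hmul : S.det * S.det = ((K * K).submatrix ι ι).det := by rw [← Matrix.det_mul, hSS]
    refine Ne.isUnit ?_
    intro h0
    rw [h0, zero_mul] at hmul
    exact h.ne' hmul.symm
  have hSiS : S⁻¹ * S = 1 := Matrix.nonsing_inv_mul S hdetS
  have hSSi : S * S⁻¹ = 1 := Matrix.mul_nonsing_inv S hdetS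
  have hSii : S⁻¹⁻¹ = S := Matrix.nonsing_inv_nonsing_inv S hdetS
  have hVT : Vᵀ = S⁻¹ * C' := by
    rw [hV, Matrix.transpose_mul, Matrix.transpose_nonsing_inv, hST, hC, hC',
      Matrix.transpose_submatrix, hKT]
  have hVTV : Vᵀ * V = 1 := by
    rw [hVT, hV]
    calc S⁻¹ * C' * (C * S⁻¹) = S⁻¹ * (C' * C) * S⁻¹ := by simp only [Matrix.mul_assoc]
      _ = 1 := by
        rw [hCC, ← hSS, ← Matrix.mul_assoc, hSiS, Matrix.one_mul, hSSi]
  have hVinj : Function.Injective V.mulVec := by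
    intro x y h
    have h3 := congrArg (fun v => Vᵀ *ᵥ v) h
    simpa [Matrix.mulVec_mulVec, hVTV, Matrix.one_mulVec] using h3
  have hApd : (Vᵀ * L * V).PosDef := by
    have h4 := my_posDef_conj hL V hVinj
    rwa [Matrix.conjTranspose_eq_transpose_of_trivial] at h4
  rw [my_integral_conj_exp hApd V Vᵀ]
  have hAeq : Vᵀ * L * V = S⁻¹ * (K.submatrix ι ι) * S⁻¹ := by
    rw [hVT, hV]
    calc S⁻¹ * C' * L * (C * S⁻¹) = S⁻¹ * (C' * L * C) * S⁻¹ := by simp only [Matrix.mul_assoc]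
      _ = _ := by rw [hCLC]
  have hAinv : (Vᵀ * L * V)⁻¹ = S * (K.submatrix ι ι)⁻¹ * S := by
    rw [hAeq, Matrix.mul_inv_rev, Matrix.mul_inv_rev, hSii]
    simp only [Matrix.mul_assoc]
  rw [hAinv, hV, hVT]
  simp only [Matrix.mul_assoc]
  rw [← Matrix.mul_assoc S S⁻¹ C', hSSi, Matrix.one_mul,
    ← Matrix.mul_assoc S⁻¹ S ((K.submatrix ι ι)⁻¹ * C'), hSiS, Matrix.one_mul]
end

section
/- For real numbers a > 0, b, and λ > 0, writing z = a + bi, the quantity (a² + b²)^{-1/4} (b²λ² + (λ^{-1} - aλ)²)^{-1/2} is maximized over λ > 0 at λ = (a² + b²)^{-1/4}, with maximum value 2^{-1/2} (1 - a/√(a²+b²))^{-1/2} (a²+b²)^{-1/2}. -/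
/-- **scalar optimization behind the resolvent bound.**
For `a > 0`, `b ≠ 0`, the function
`f(λ) = (a² + b²)^{-1/4} (b²λ² + (λ⁻¹ - aλ)²)^{-1/2}`
is maximized over `λ > 0` at `λ = (a² + b²)^{-1/4}`, with maximum value
`2^{-1/2} (1 - a/√(a²+b²))^{-1/2} (a²+b²)^{-1/2}`. -/
theorem scalar_resolvent_optimization (a b : ℝ) (ha : 0 < a) (hb : b ≠ 0) :
    letI f : ℝ → ℝ := fun l =>
      (a ^ 2 + b ^ 2) ^ (-(1 / 4 : ℝ)) *
        (b ^ 2 * l ^ 2 + (l⁻¹ - a * l) ^ 2) ^ (-(1 / 2 : ℝ))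
    (∀ l : ℝ, 0 < l →
        f l ≤ (2 : ℝ) ^ (-(1 / 2 : ℝ)) *
          (1 - a / Real.sqrt (a ^ 2 + b ^ 2)) ^ (-(1 / 2 : ℝ)) *
          (a ^ 2 + b ^ 2) ^ (-(1 / 2 : ℝ))) ∧
      f ((a ^ 2 + b ^ 2) ^ (-(1 / 4 : ℝ))) =
        (2 : ℝ) ^ (-(1 / 2 : ℝ)) *
          (1 - a / Real.sqrt (a ^ 2 + b ^ 2)) ^ (-(1 / 2 : ℝ)) *
          (a ^ 2 + b ^ 2) ^ (-(1 / 2 : ℝ)) := by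
  have hs : (0:ℝ) < a ^ 2 + b ^ 2 := by positivity
  set s := a ^ 2 + b ^ 2 with hs_def
  set r := Real.sqrt s with hr_def
  have hr : 0 < r := Real.sqrt_pos.2 hs
  have hb2 : (0:ℝ) < b ^ 2 := by positivity
  have hra : a < r := by
    rw [hr_def, Real.lt_sqrt ha.le]
    linarith [hs_def]
  have h2ra : (0:ℝ) < 2 * (r - a) := by linarith
  have hr2 : r ^ 2 = s := Real.sq_sqrt hs.le
  have hr2' : r ^ 2 = a ^ 2 + b ^ 2 := by rw [hr2]
  have E : ∀ x : ℝ, 0 ≤ x → x ^ (-(1/2:ℝ)) = (Real.sqrt x)⁻¹ := fun x hx => by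
    rw [Real.rpow_neg hx, Real.sqrt_eq_rpow]
  have E4 : s ^ (-(1/4:ℝ)) = (Real.sqrt r)⁻¹ := by
    rw [Real.rpow_neg hs.le, show (1/4:ℝ) = 1/2 * (1/2) by norm_num,
      Real.rpow_mul hs.le, ← Real.sqrt_eq_rpow, ← Real.sqrt_eq_rpow, ← hr_def]
  -- key: the RHS equals s^(-1/4) * (2(r-a))^(-1/2)
  have key : (2:ℝ) ^ (-(1/2:ℝ)) * (1 - a / r) ^ (-(1/2:ℝ)) * s ^ (-(1/2:ℝ))
      = s ^ (-(1/4:ℝ)) * (2 * (r - a)) ^ (-(1/2:ℝ)) := by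
    have h1 : (1 - a / r) = (r - a) / r := by field_simp
    rw [h1, E 2 (by norm_num), E _ (div_nonneg (by linarith) hr.le), E s hs.le, E _ h2ra.le, E4,
      ← hr_def, Real.sqrt_div (by linarith : (0:ℝ) ≤ r - a),
      Real.sqrt_mul (by norm_num : (0:ℝ) ≤ 2)]
    have hu : (0:ℝ) < Real.sqrt 2 := by positivity
    have hv : (0:ℝ) < Real.sqrt (r - a) := Real.sqrt_pos.2 (by linarith)
    have hw : (0:ℝ) < Real.sqrt r := Real.sqrt_pos.2 hr
    have hww : Real.sqrt r * Real.sqrt r = r := Real.mul_self_sqrt hr.le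
    field_simp
    linear_combination hww
  -- the minimum of the inner expression
  have hg : ∀ l : ℝ, 0 < l → 2 * (r - a) ≤ b ^ 2 * l ^ 2 + (l⁻¹ - a * l) ^ 2 := by
    intro l hl
    have hl' : l ≠ 0 := hl.ne'
    have hid : b ^ 2 * l ^ 2 + (l⁻¹ - a * l) ^ 2
        = (l⁻¹ - r * l) ^ 2 + 2 * (r - a) := by
      field_simp
      linear_combination (-l ^ 4) * hr2'
    nlinarith [sq_nonneg (l⁻¹ - r * l)]
  refine ⟨fun l hl => ?_, ?_⟩
  · show s ^ (-(1/4:ℝ)) * (b ^ 2 * l ^ 2 + (l⁻¹ - a * l) ^ 2) ^ (-(1/2:ℝ)) ≤ _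
    rw [key]
    exact mul_le_mul_of_nonneg_left
      (Real.rpow_le_rpow_of_nonpos h2ra (hg l hl) (by norm_num))
      (Real.rpow_nonneg hs.le _)
  · show s ^ (-(1/4:ℝ)) *
        (b ^ 2 * (s ^ (-(1/4:ℝ))) ^ 2 + ((s ^ (-(1/4:ℝ)))⁻¹ - a * s ^ (-(1/4:ℝ))) ^ 2)
          ^ (-(1/2:ℝ)) = _
    rw [key]
    set l₀ := s ^ (-(1/4:ℝ)) with hl0_def
    have hl0 : 0 < l₀ := Real.rpow_pos_of_pos hs _
    have hA : l₀ ^ 2 = s ^ (-(1/2:ℝ)) := by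
      rw [hl0_def, ← Real.rpow_natCast (s ^ (-(1/4:ℝ))) 2, ← Real.rpow_mul hs.le]
      norm_num
    have hB : l₀⁻¹ = s ^ ((1/4:ℝ)) := by
      rw [hl0_def, ← Real.rpow_neg hs.le]; norm_num
    have hg0 : b ^ 2 * l₀ ^ 2 + (l₀⁻¹ - a * l₀) ^ 2 = 2 * (r - a) := by
      have hexp : b ^ 2 * l₀ ^ 2 + (l₀⁻¹ - a * l₀) ^ 2
          = s * l₀ ^ 2 + l₀⁻¹ ^ 2 - 2 * a := by
        rw [hs_def]
        field_simp
        ring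
      have h6 : (s ^ ((1/4):ℝ)) ^ 2 = r := by
        rw [← Real.rpow_natCast _ 2, ← Real.rpow_mul hs.le, hr_def, Real.sqrt_eq_rpow]
        norm_num
      have h5 : s * s ^ (-(1/2:ℝ)) = r := by
        nth_rewrite 1 [show s = s ^ (1:ℝ) from (Real.rpow_one s).symm]
        rw [← Real.rpow_add hs, hr_def, Real.sqrt_eq_rpow]
        norm_num
      rw [hexp, hA, hB, h6, h5]
      ring
    rw [hg0]
end

section
/- Let A₁₁, A₁₂, A₂₁, A₂₂ be matrix blocks of compatible sizes and define A_α as the block matrix [[A₁₁, A₁₂],[A₂₁, A₂₂ + αI]] for α ≥ 0. Then as α → ∞, e^{-A_α} converges to the block matrix [[e^{-A₁₁}, 0],[0, 0]]. -/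
open Matrix Filter NormedSpace Set

namespace ExpBlockAux

attribute [local instance] Matrix.linftyOpNormedAddCommGroup Matrix.linftyOpNormedRing Matrix.linftyOpNormedAlgebra

variable {n : Type*} [Fintype n] [DecidableEq n]

lemma norm_one_le' : ‖(1 : Matrix n n ℝ)‖ ≤ 1 := by
  rw [← Matrix.diagonal_one, Matrix.linfty_opNorm_diagonal]
  exact (pi_norm_le_iff_of_nonneg zero_le_one).2 fun i => by simp

lemma norm_exp_le' (x : Matrix n n ℝ) : ‖NormedSpace.exp x‖ ≤ Real.exp ‖x‖ := by
  have hpow : ∀ k : ℕ, ‖x ^ k‖ ≤ ‖x‖ ^ k := by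
    intro k
    induction k with
    | zero => simpa using norm_one_le'
    | succ k ih =>
      calc ‖x ^ (k+1)‖ = ‖x ^ k * x‖ := by rw [pow_succ]
      _ ≤ ‖x ^ k‖ * ‖x‖ := norm_mul_le _ _
      _ ≤ ‖x‖ ^ k * ‖x‖ := mul_le_mul_of_nonneg_right ih (norm_nonneg x)
      _ = ‖x‖ ^ (k+1) := (pow_succ _ _).symm
  have hb : ∀ k : ℕ, ‖(k.factorial : ℝ)⁻¹ • x ^ k‖ ≤ ‖x‖ ^ k / k.factorial := by
    intro k
    rw [norm_smul, norm_inv, Real.norm_natCast, div_eq_inv_mul]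
    exact mul_le_mul_of_nonneg_left (hpow k) (by positivity)
  have hsum : Summable fun k : ℕ => ‖x‖ ^ k / (k.factorial : ℝ) :=
    Real.summable_pow_div_factorial _
  have hsum2 : Summable fun k : ℕ => ‖(k.factorial : ℝ)⁻¹ • x ^ k‖ :=
    Summable.of_nonneg_of_le (fun k => norm_nonneg _) hb hsum
  rw [exp_eq_tsum ℝ]
  refine (norm_tsum_le_tsum_norm hsum2).trans ?_
  refine le_trans (Summable.tsum_le_tsum hb hsum2 hsum) (le_of_eq ?_)
  rw [Real.exp_eq_exp_ℝ, exp_eq_tsum ℝ]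
  congr 1
  ext k
  rw [smul_eq_mul, div_eq_inv_mul]

lemma nnnorm_fromBlocks_le {l o : Type*} [Fintype l] [Fintype o] {m : Type*} [Fintype m]
    (W : Matrix n l ℝ) (X : Matrix n m ℝ) (Y : Matrix o l ℝ) (Z : Matrix o m ℝ) :
    ‖fromBlocks W X Y Z‖₊ ≤ max (‖W‖₊ + ‖X‖₊) (‖Y‖₊ + ‖Z‖₊) := by
  rw [Matrix.linfty_opNNNorm_def]
  refine Finset.sup_le ?_
  rintro (i | i) -
  · refine le_max_of_le_left ?_
    rw [Fintype.sum_sum_type]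
    refine add_le_add ?_ ?_
    · rw [Matrix.linfty_opNNNorm_def]
      exact Finset.le_sup (f := fun i => ∑ j, ‖W i j‖₊) (Finset.mem_univ i)
    · rw [Matrix.linfty_opNNNorm_def]
      exact Finset.le_sup (f := fun i => ∑ j, ‖X i j‖₊) (Finset.mem_univ i)
  · refine le_max_of_le_right ?_
    rw [Fintype.sum_sum_type]
    refine add_le_add ?_ ?_
    · rw [Matrix.linfty_opNNNorm_def]
      exact Finset.le_sup (f := fun i => ∑ j, ‖Y i j‖₊) (Finset.mem_univ i)
    · rw [Matrix.linfty_opNNNorm_def]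
      exact Finset.le_sup (f := fun i => ∑ j, ‖Z i j‖₊) (Finset.mem_univ i)

lemma norm_fromBlocks_le {l o : Type*} [Fintype l] [Fintype o] {m : Type*} [Fintype m]
    (W : Matrix n l ℝ) (X : Matrix n m ℝ) (Y : Matrix o l ℝ) (Z : Matrix o m ℝ) :
    ‖fromBlocks W X Y Z‖ ≤ max (‖W‖ + ‖X‖) (‖Y‖ + ‖Z‖) := by
  have h := nnnorm_fromBlocks_le W X Y Z
  rw [← NNReal.coe_le_coe] at h
  push_cast at h
  simpa [coe_nnnorm] using h

lemma exp_fromBlocks {m : Type*} [Fintype m] [DecidableEq m]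
    (X : Matrix n n ℝ) (Y : Matrix m m ℝ) :
    NormedSpace.exp (fromBlocks X 0 0 Y) =
      fromBlocks (NormedSpace.exp X) 0 0 (NormedSpace.exp Y) := by
  let F : Matrix n n ℝ × Matrix m m ℝ →+* Matrix (n ⊕ m) (n ⊕ m) ℝ :=
    { toFun := fun XY => fromBlocks XY.1 0 0 XY.2
      map_one' := Matrix.fromBlocks_one
      map_mul' := fun a b => by
        rw [Matrix.fromBlocks_multiply]
        simp
      map_zero' := by simp [Matrix.fromBlocks_zero]
      map_add' := fun a b => by
        rw [Matrix.fromBlocks_add]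
        simp }
  have hF : Continuous F :=
    Continuous.matrix_fromBlocks continuous_fst continuous_const continuous_const continuous_snd
  have h := map_exp F hF (X, Y)
  have hexp : NormedSpace.exp (X, Y) = (NormedSpace.exp X, NormedSpace.exp Y) :=
    Prod.ext (Prod.fst_exp (X, Y)) (Prod.snd_exp (X, Y))
  exact h.symm.trans (congrArg F hexp)

lemma exp_smul_one (c : ℝ) :
    NormedSpace.exp (c • (1 : Matrix n n ℝ)) = Real.exp c • 1 := by
  have h1 : c • (1 : Matrix n n ℝ) = algebraMap ℝ (Matrix n n ℝ) c :=
    (Algebra.algebraMap_eq_smul_one c).symm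
  rw [h1]
  refine ((algebraMap_exp_comm (𝔸 := Matrix n n ℝ) c).symm).trans ?_
  rw [← Real.exp_eq_exp_ℝ, Algebra.algebraMap_eq_smul_one]

lemma norm_exp_smul_neg_le (X : Matrix n n ℝ) {t : ℝ} (h0 : 0 ≤ t) (h1 : t ≤ 1) :
    ‖NormedSpace.exp (t • -X)‖ ≤ Real.exp ‖X‖ := by
  refine (norm_exp_le' _).trans ?_
  rw [Real.exp_le_exp, norm_smul, norm_neg, Real.norm_eq_abs, abs_of_nonneg h0]
  nlinarith [norm_nonneg X]

lemma duhamel (X Y : Matrix n n ℝ) (t : ℝ) :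
    NormedSpace.exp (t • (X + Y)) - NormedSpace.exp (t • Y) =
      ∫ s in (0:ℝ)..t,
        NormedSpace.exp ((t - s) • Y) * X * NormedSpace.exp (s • (X + Y)) := by
  have cont : Continuous fun s : ℝ =>
      NormedSpace.exp ((t - s) • Y) * X * NormedSpace.exp (s • (X + Y)) := by
    refine Continuous.mul (Continuous.mul ?_ continuous_const) ?_
    · exact exp_continuous.comp ((continuous_const.sub continuous_id).smul continuous_const)
    · exact exp_continuous.comp (continuous_id.smul continuous_const)
  have key : ∀ s : ℝ, HasDerivAt
      (fun u : ℝ => NormedSpace.exp ((t - u) • Y) * NormedSpace.exp (u • (X + Y)))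
      (NormedSpace.exp ((t - s) • Y) * X * NormedSpace.exp (s • (X + Y))) s := by
    intro s
    have h1 : HasDerivAt (fun u : ℝ => NormedSpace.exp ((t - u) • Y))
        ((-1 : ℝ) • (NormedSpace.exp ((t - s) • Y) * Y)) s := by
      have hinner : HasDerivAt (fun u : ℝ => t - u) (-1 : ℝ) s := by
        simpa using (hasDerivAt_id s).const_sub t
      exact (hasDerivAt_exp_smul_const (𝕂 := ℝ) Y (t - s)).scomp s hinner
    have h2 : HasDerivAt (fun u : ℝ => NormedSpace.exp (u • (X + Y)))
        ((X + Y) * NormedSpace.exp (s • (X + Y))) s :=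
      hasDerivAt_exp_smul_const' (𝕂 := ℝ) (X + Y) s
    have := h1.mul h2
    refine this.congr_deriv ?_
    simp only [neg_one_smul, neg_mul]
    noncomm_ring
  have hFTC := intervalIntegral.integral_eq_sub_of_hasDerivAt
    (fun s _ => key s) (cont.intervalIntegrable 0 t)
  rw [hFTC]
  simp [NormedSpace.exp_zero]

section Main

variable {p q : ℕ}

/-- The projection onto the second block. -/
def Qm (p q : ℕ) : Matrix (Fin p ⊕ Fin q) (Fin p ⊕ Fin q) ℝ := fromBlocks 0 0 0 1

lemma exp_smul_Qm (c : ℝ) :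
    NormedSpace.exp (c • Qm p q) = fromBlocks 1 0 0 (Real.exp c • 1) := by
  have h : c • Qm p q = fromBlocks 0 0 0 (c • (1 : Matrix (Fin q) (Fin q) ℝ)) := by
    rw [Qm, Matrix.fromBlocks_smul]
    simp
  rw [h, exp_fromBlocks, NormedSpace.exp_zero, exp_smul_one]

lemma norm_exp_smul_Qm_le {c : ℝ} (hc : c ≤ 0) :
    ‖NormedSpace.exp (c • Qm p q)‖ ≤ 1 := by
  rw [exp_smul_Qm]
  refine (norm_fromBlocks_le _ _ _ _).trans ?_
  refine max_le ?_ ?_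
  · rw [norm_zero, add_zero]
    exact norm_one_le'
  · simp only [norm_zero, zero_add, norm_smul, Real.norm_eq_abs,
      abs_of_pos (Real.exp_pos c)]
    exact mul_le_one₀ (Real.exp_le_one_iff.2 hc) (norm_nonneg _) norm_one_le'

lemma norm_Qm_le : ‖Qm p q‖ ≤ 1 := by
  refine (norm_fromBlocks_le _ _ _ _).trans ?_
  refine max_le (by simp) ?_
  rw [norm_zero, zero_add]
  exact norm_one_le'

lemma Qm_mul_exp_smul_Qm (c : ℝ) :
    Qm p q * NormedSpace.exp (c • Qm p q) = Real.exp c • Qm p q := by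
  rw [exp_smul_Qm, Qm, Matrix.fromBlocks_multiply, Matrix.fromBlocks_smul]
  simp

lemma norm_exp_perturb_le (A' : Matrix (Fin p ⊕ Fin q) (Fin p ⊕ Fin q) ℝ) {α : ℝ} (hα : 0 ≤ α)
    {t : ℝ} (ht : t ∈ Icc (0:ℝ) 1) :
    ‖NormedSpace.exp (t • (-A' + -(α • Qm p q)))‖ ≤ Real.exp (‖A'‖ + 1) := by
  set K : ℝ := ‖A'‖ + 1 with hK
  have hKpos : 0 < K := by positivity
  set S : ℝ → Matrix (Fin p ⊕ Fin q) (Fin p ⊕ Fin q) ℝ :=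
    fun s => NormedSpace.exp (s • (-A' + -(α • Qm p q))) with hS
  have hScont : Continuous S := exp_continuous.comp (continuous_id.smul continuous_const)
  set h : ℝ → ℝ := fun s => ‖S s‖ with hh
  have hhcont : Continuous h := hScont.norm
  set u : ℝ → ℝ := fun r => ∫ s in (0:ℝ)..r, h s with hu
  have hud : ∀ r : ℝ, HasDerivAt u (h r) r := by
    intro r
    exact intervalIntegral.integral_hasDerivAt_right (hhcont.intervalIntegrable 0 r)
      (hhcont.stronglyMeasurableAtFilter _ _) hhcont.continuousAt
  have hunonneg : ∀ r : ℝ, 0 ≤ r → 0 ≤ u r := by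
    intro r hr
    exact intervalIntegral.integral_nonneg hr fun s _ => norm_nonneg _
  -- the Duhamel-type integral inequality
  have hkey : ∀ r ∈ Icc (0:ℝ) 1, h r ≤ 1 + ‖A'‖ * u r := by
    rintro r ⟨hr0, hr1⟩
    have hexpQ : ∀ c : ℝ, 0 ≤ c → ‖NormedSpace.exp (c • -(α • Qm p q))‖ ≤ 1 := by
      intro c hc
      have : c • -(α • Qm p q) = (-(c * α)) • Qm p q := by
        rw [smul_neg, smul_smul, neg_smul]
      rw [this]
      exact norm_exp_smul_Qm_le (by nlinarith)
    have hd := duhamel (-A') (-(α • Qm p q)) r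
    have hmain : S r = NormedSpace.exp (r • -(α • Qm p q)) +
        ∫ s in (0:ℝ)..r,
          NormedSpace.exp ((r - s) • -(α • Qm p q)) * (-A') * S s := by
      rw [hS]
      rw [← hd]
      abel
    show ‖S r‖ ≤ 1 + ‖A'‖ * u r
    rw [hmain]
    refine (norm_add_le _ _).trans ?_
    have h1 : ‖NormedSpace.exp (r • -(α • Qm p q))‖ ≤ 1 := hexpQ r hr0
    have h2 : ‖∫ s in (0:ℝ)..r,
        NormedSpace.exp ((r - s) • -(α • Qm p q)) * (-A') * S s‖ ≤ ‖A'‖ * u r := by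
      refine (intervalIntegral.norm_integral_le_integral_norm hr0).trans ?_
      have hmono : ∀ s ∈ Icc (0:ℝ) r,
          ‖NormedSpace.exp ((r - s) • -(α • Qm p q)) * (-A') * S s‖ ≤ ‖A'‖ * h s := by
        rintro s ⟨hs0, hsr⟩
        calc ‖NormedSpace.exp ((r - s) • -(α • Qm p q)) * (-A') * S s‖
            ≤ ‖NormedSpace.exp ((r - s) • -(α • Qm p q)) * (-A')‖ * ‖S s‖ := norm_mul_le _ _
        _ ≤ ‖NormedSpace.exp ((r - s) • -(α • Qm p q))‖ * ‖(-A')‖ * ‖S s‖ := by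
            exact mul_le_mul_of_nonneg_right (norm_mul_le _ _) (norm_nonneg _)
        _ ≤ 1 * ‖A'‖ * h s := by
            rw [norm_neg]
            exact mul_le_mul_of_nonneg_right
              (mul_le_mul_of_nonneg_right (hexpQ _ (by linarith)) (norm_nonneg _))
              (norm_nonneg _)
        _ = ‖A'‖ * h s := by rw [one_mul]
      have hintg : IntervalIntegrable
          (fun s => ‖NormedSpace.exp ((r - s) • -(α • Qm p q)) * (-A') * S s‖)
          MeasureTheory.volume 0 r := by
        refine Continuous.intervalIntegrable ?_ 0 r
        refine Continuous.norm ?_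
        exact ((exp_continuous.comp
          ((continuous_const.sub continuous_id).smul continuous_const)).mul
            continuous_const).mul hScont
      have hintg2 : IntervalIntegrable (fun s => ‖A'‖ * h s) MeasureTheory.volume 0 r :=
        (continuous_const.mul hhcont).intervalIntegrable 0 r
      calc (∫ s in (0:ℝ)..r, ‖NormedSpace.exp ((r - s) • -(α • Qm p q)) * (-A') * S s‖)
          ≤ ∫ s in (0:ℝ)..r, ‖A'‖ * h s := by
            refine intervalIntegral.integral_mono_on hr0 hintg hintg2 hmono
      _ = ‖A'‖ * u r := by rw [hu, intervalIntegral.integral_const_mul]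
    linarith
  -- Grönwall
  have hgron := norm_le_gronwallBound_of_norm_deriv_right_le (f := u) (f' := h)
    (a := 0) (b := 1) (δ := 0) (K := K) (ε := 1)
    (fun r _ => (hud r).continuousAt.continuousWithinAt)
    (fun r _ => (hud r).hasDerivWithinAt)
    (by simp [hu])
    (by
      rintro r ⟨hr0, hr1⟩
      have h1 := hkey r ⟨hr0, le_of_lt hr1⟩
      have h2 := hunonneg r hr0
      have e1 : ‖h r‖ = h r := Real.norm_of_nonneg (norm_nonneg (S r))
      have e2 : ‖u r‖ = u r := Real.norm_of_nonneg h2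
      rw [e1, e2]
      have : ‖A'‖ * u r ≤ K * u r := mul_le_mul_of_nonneg_right (by simp [hK]) h2
      linarith)
  have hut := hgron t ht
  have hfin : h t ≤ 1 + K * u t := by
    have h1 := hkey t ht
    have h2 := hunonneg t ht.1
    have : ‖A'‖ * u t ≤ K * u t := mul_le_mul_of_nonneg_right (by simp [hK]) h2
    linarith
  have hub : u t ≤ (Real.exp (K * t) - 1) / K := by
    have htmp := hut
    rw [Real.norm_of_nonneg (hunonneg t ht.1), gronwallBound_of_K_ne_0 hKpos.ne'] at htmp
    simp only [sub_zero, zero_mul, zero_add, one_div] at htmp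
    rw [div_eq_inv_mul]
    exact htmp
  calc h t ≤ 1 + K * u t := hfin
  _ ≤ 1 + K * ((Real.exp (K * t) - 1) / K) := by
      exact add_le_add_right (mul_le_mul_of_nonneg_left hub hKpos.le) 1
  _ = Real.exp (K * t) := by field_simp; ring
  _ ≤ Real.exp K := by
      rw [Real.exp_le_exp]
      nlinarith [ht.2, hKpos]

lemma integral_exp_kernel_le {α : ℝ} (hα : 0 < α) {t : ℝ} (ht : 0 ≤ t) :
    (∫ r in (0:ℝ)..t, Real.exp (-((t - r) * α))) ≤ 1 / α := by
  have hder : ∀ r : ℝ, HasDerivAt (fun r => Real.exp ((r - t) * α) / α)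
      (Real.exp (-((t - r) * α))) r := by
    intro r
    have h1 : HasDerivAt (fun r : ℝ => (r - t) * α) (1 * α) r :=
      ((hasDerivAt_id r).sub_const t).mul_const α
    have h2 := (h1.exp).div_const α
    refine h2.congr_deriv ?_
    have hr : -((t - r) * α) = (r - t) * α := by ring
    rw [hr, one_mul, mul_div_cancel_right₀ _ hα.ne']
  have hcont : Continuous fun r : ℝ => Real.exp (-((t - r) * α)) := by
    exact Real.continuous_exp.comp (((continuous_const.sub continuous_id).mul
      continuous_const).neg)
  rw [intervalIntegral.integral_eq_sub_of_hasDerivAt (fun r _ => hder r)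
    (hcont.intervalIntegrable 0 t)]
  rw [sub_self, zero_mul, Real.exp_zero]
  have hle : 0 ≤ Real.exp ((0 - t) * α) / α := by positivity
  linarith

lemma integral_exp_decay_le {α : ℝ} (hα : 0 < α) :
    (∫ s in (0:ℝ)..1, Real.exp (-(s * α))) ≤ 1 / α := by
  have hder : ∀ r : ℝ, HasDerivAt (fun r => -(Real.exp (-(r * α)) / α))
      (Real.exp (-(r * α))) r := by
    intro r
    have h1 : HasDerivAt (fun r : ℝ => -(r * α)) (-(1 * α)) r :=
      ((hasDerivAt_id r).mul_const α).neg
    have h2 := ((h1.exp).div_const α).neg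
    refine h2.congr_deriv ?_
    field_simp
  have hcont : Continuous fun r : ℝ => Real.exp (-(r * α)) :=
    Real.continuous_exp.comp ((continuous_id.mul continuous_const).neg)
  rw [intervalIntegral.integral_eq_sub_of_hasDerivAt (fun r _ => hder r)
    (hcont.intervalIntegrable 0 1)]
  have hle : 0 ≤ Real.exp (-(1 * α)) / α := by positivity
  have : Real.exp (-(0 * α)) / α = 1 / α := by
    rw [zero_mul, neg_zero, Real.exp_zero]
  rw [neg_sub_neg, this]
  linarith

lemma norm_Qm_mul_exp_le (A' : Matrix (Fin p ⊕ Fin q) (Fin p ⊕ Fin q) ℝ) {α : ℝ} (hα : 0 < α)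
    {t : ℝ} (ht : t ∈ Icc (0:ℝ) 1) :
    ‖Qm p q * NormedSpace.exp (t • (-A' + -(α • Qm p q)))‖ ≤
      Real.exp (-(t * α)) + ‖A'‖ * Real.exp (‖A'‖ + 1) / α := by
  obtain ⟨ht0, ht1⟩ := ht
  set S : ℝ → Matrix (Fin p ⊕ Fin q) (Fin p ⊕ Fin q) ℝ :=
    fun s => NormedSpace.exp (s • (-A' + -(α • Qm p q))) with hS
  have hScont : Continuous S := exp_continuous.comp (continuous_id.smul continuous_const)
  have hsmulQ : ∀ c : ℝ, c • -(α • Qm p q) = (-(c * α)) • Qm p q := by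
    intro c
    rw [smul_neg, smul_smul, neg_smul]
  set g : ℝ → Matrix (Fin p ⊕ Fin q) (Fin p ⊕ Fin q) ℝ :=
    fun s => NormedSpace.exp ((t - s) • -(α • Qm p q)) * (-A') * S s with hg
  have hgcont : Continuous g :=
    ((exp_continuous.comp
      ((continuous_const.sub continuous_id).smul continuous_const)).mul
        continuous_const).mul hScont
  have hd := duhamel (-A') (-(α • Qm p q)) t
  have hmain : S t = NormedSpace.exp (t • -(α • Qm p q)) + ∫ s in (0:ℝ)..t, g s := by
    rw [hS, ← hd]
    abel
  have hQint : Qm p q * (∫ s in (0:ℝ)..t, g s) = ∫ s in (0:ℝ)..t, Qm p q * g s := by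
    have := (ContinuousLinearMap.mul ℝ
      (Matrix (Fin p ⊕ Fin q) (Fin p ⊕ Fin q) ℝ) (Qm p q)).intervalIntegral_comp_comm
      (hgcont.intervalIntegrable (μ := MeasureTheory.volume) 0 t)
    simpa using this.symm
  have hsplit : Qm p q * S t = Real.exp (-(t * α)) • Qm p q + ∫ s in (0:ℝ)..t, Qm p q * g s := by
    rw [hmain, mul_add, hQint, hsmulQ t, Qm_mul_exp_smul_Qm]
  show ‖Qm p q * S t‖ ≤ _
  rw [hsplit]
  refine (norm_add_le _ _).trans ?_
  have hn1 : ‖Real.exp (-(t * α)) • Qm p q‖ ≤ Real.exp (-(t * α)) := by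
    rw [norm_smul, Real.norm_eq_abs, abs_of_pos (Real.exp_pos _)]
    exact mul_le_of_le_one_right (Real.exp_pos _).le norm_Qm_le
  have hMsup : ∀ s ∈ Icc (0:ℝ) t, ‖S s‖ ≤ Real.exp (‖A'‖ + 1) := by
    rintro s ⟨hs0, hst⟩
    exact norm_exp_perturb_le A' hα.le ⟨hs0, hst.trans ht1⟩
  have hptwise : ∀ s ∈ Icc (0:ℝ) t, ‖Qm p q * g s‖ ≤
      Real.exp (-((t - s) * α)) * (‖A'‖ * Real.exp (‖A'‖ + 1)) := by
    rintro s ⟨hs0, hst⟩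
    have hrw : Qm p q * g s =
        (Real.exp (-((t - s) * α)) • Qm p q) * (-A') * S s := by
      rw [hg, ← mul_assoc, ← mul_assoc, hsmulQ (t - s), Qm_mul_exp_smul_Qm]
    rw [hrw]
    calc ‖Real.exp (-((t - s) * α)) • Qm p q * (-A') * S s‖
        ≤ ‖Real.exp (-((t - s) * α)) • Qm p q * (-A')‖ * ‖S s‖ := norm_mul_le _ _
    _ ≤ ‖Real.exp (-((t - s) * α)) • Qm p q‖ * ‖(-A')‖ * ‖S s‖ :=
        mul_le_mul_of_nonneg_right (norm_mul_le _ _) (norm_nonneg _)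
    _ ≤ Real.exp (-((t - s) * α)) * ‖A'‖ * Real.exp (‖A'‖ + 1) := by
        rw [norm_neg]
        have h1 : ‖Real.exp (-((t - s) * α)) • Qm p q‖ ≤ Real.exp (-((t - s) * α)) := by
          rw [norm_smul, Real.norm_eq_abs, abs_of_pos (Real.exp_pos _)]
          exact mul_le_of_le_one_right (Real.exp_pos _).le norm_Qm_le
        exact mul_le_mul (mul_le_mul_of_nonneg_right h1 (norm_nonneg _))
          (hMsup s ⟨hs0, hst⟩) (norm_nonneg _) (by positivity)
    _ = Real.exp (-((t - s) * α)) * (‖A'‖ * Real.exp (‖A'‖ + 1)) := by ring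
  have hbound : ‖∫ s in (0:ℝ)..t, Qm p q * g s‖ ≤ ‖A'‖ * Real.exp (‖A'‖ + 1) / α := by
    refine (intervalIntegral.norm_integral_le_integral_norm ht0).trans ?_
    have hint1 : IntervalIntegrable (fun s => ‖Qm p q * g s‖) MeasureTheory.volume 0 t := by
      exact ((continuous_const.mul hgcont).norm).intervalIntegrable 0 t
    have hint2 : IntervalIntegrable
        (fun s => Real.exp (-((t - s) * α)) * (‖A'‖ * Real.exp (‖A'‖ + 1)))
        MeasureTheory.volume 0 t := by
      refine Continuous.intervalIntegrable ?_ 0 t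
      exact (Real.continuous_exp.comp (((continuous_const.sub continuous_id).mul
        continuous_const).neg)).mul continuous_const
    calc (∫ s in (0:ℝ)..t, ‖Qm p q * g s‖)
        ≤ ∫ s in (0:ℝ)..t, Real.exp (-((t - s) * α)) * (‖A'‖ * Real.exp (‖A'‖ + 1)) :=
          intervalIntegral.integral_mono_on ht0 hint1 hint2 hptwise
    _ = (∫ s in (0:ℝ)..t, Real.exp (-((t - s) * α))) * (‖A'‖ * Real.exp (‖A'‖ + 1)) := by
          rw [intervalIntegral.integral_mul_const]
    _ ≤ (1 / α) * (‖A'‖ * Real.exp (‖A'‖ + 1)) := by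
          refine mul_le_mul_of_nonneg_right (integral_exp_kernel_le hα ht0) (by positivity)
    _ = ‖A'‖ * Real.exp (‖A'‖ + 1) / α := by ring
  linarith

lemma exp_smul_neg_D (X : Matrix (Fin p) (Fin p) ℝ) (Y : Matrix (Fin q) (Fin q) ℝ) (α t : ℝ) :
    NormedSpace.exp (t • -(fromBlocks X 0 0 (Y + α • 1))) =
      fromBlocks (NormedSpace.exp (t • -X)) 0 0
        (Real.exp (-(t * α)) • NormedSpace.exp (t • -Y)) := by
  have h1 : t • -(fromBlocks X 0 0 (Y + α • 1)) =
      fromBlocks (t • -X) 0 0 (t • -Y + (-(t * α)) • (1 : Matrix (Fin q) (Fin q) ℝ)) := by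
    rw [Matrix.fromBlocks_neg, Matrix.fromBlocks_smul]
    have h2 : t • -(Y + α • (1 : Matrix (Fin q) (Fin q) ℝ)) = t • -Y + (-(t * α)) • 1 := by
      rw [neg_add, smul_add]
      congr 1
      rw [smul_neg, smul_smul, neg_smul]
    rw [h2]
    simp
  rw [h1, exp_fromBlocks]
  congr 1
  have hcomm : Commute (t • -Y) ((-(t * α)) • (1 : Matrix (Fin q) (Fin q) ℝ)) :=
    ((Commute.one_right (t • -Y)).smul_right _)
  erw [NormedSpace.exp_add_of_commute hcomm]
  erw [exp_smul_one]
  rw [mul_smul_comm, mul_one]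
  rfl

lemma master (A11 : Matrix (Fin p) (Fin p) ℝ) (A12 : Matrix (Fin p) (Fin q) ℝ)
    (A21 : Matrix (Fin q) (Fin p) ℝ) (A22 : Matrix (Fin q) (Fin q) ℝ) :
    Tendsto
      (fun α : ℝ =>
        NormedSpace.exp (-(Matrix.fromBlocks A11 A12 A21 (A22 + α • 1))))
      atTop
      (nhds (Matrix.fromBlocks (NormedSpace.exp (-A11)) 0 0 0)) := by
  classical
  set Am : Matrix (Fin p ⊕ Fin q) (Fin p ⊕ Fin q) ℝ := fromBlocks A11 A12 A21 A22 with hAm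
  set Nm : Matrix (Fin p ⊕ Fin q) (Fin p ⊕ Fin q) ℝ := fromBlocks 0 A12 A21 0 with hNm
  set M0 : ℝ := Real.exp (‖Am‖ + 1) with hM0
  set MD : ℝ := Real.exp ‖A11‖ + Real.exp ‖A22‖ with hMD
  set CB : ℝ := ‖Am‖ * M0 with hCB
  set C : ℝ := MD * ‖Nm‖ + MD * ‖Nm‖ * CB + Real.exp ‖A22‖ * (‖Nm‖ * M0) with hC
  have hMDpos : 0 < MD := by rw [hMD]; positivity
  have hM0pos : 0 < M0 := Real.exp_pos _
  have hCBnn : 0 ≤ CB := by rw [hCB]; positivity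
  have hsplit1 : ∀ α : ℝ,
      Nm + fromBlocks A11 0 0 (A22 + α • 1) = fromBlocks A11 A12 A21 (A22 + α • 1) := by
    intro α
    rw [hNm, Matrix.fromBlocks_add]
    simp
  have hsplit2 : ∀ α : ℝ,
      Am + α • Qm p q = fromBlocks A11 A12 A21 (A22 + α • 1) := by
    intro α
    rw [hAm, Qm, Matrix.fromBlocks_smul, Matrix.fromBlocks_add]
    simp
  have hNsp : Nm * Qm p q + Qm p q * Nm = Nm := by
    rw [hNm, Qm, Matrix.fromBlocks_multiply, Matrix.fromBlocks_multiply,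
      Matrix.fromBlocks_add]
    simp
  -- the main difference estimate
  have hdiff : ∀ α : ℝ, 1 ≤ α →
      ‖NormedSpace.exp (-(fromBlocks A11 A12 A21 (A22 + α • 1))) -
        NormedSpace.exp (-(fromBlocks A11 0 0 (A22 + α • 1)))‖ ≤ C / α := by
    intro α hα1
    have hα0 : (0:ℝ) < α := lt_of_lt_of_le one_pos hα1
    have hBD : -Nm + -(fromBlocks A11 0 0 (A22 + α • 1)) = -Am + -(α • Qm p q) := by
      rw [← neg_add, ← neg_add, hsplit1 α, hsplit2 α]
    have hBneg : -Am + -(α • Qm p q) = -(fromBlocks A11 A12 A21 (A22 + α • 1)) := by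
      rw [← neg_add, hsplit2 α]
    have hd := duhamel (-Nm) (-(fromBlocks A11 0 0 (A22 + α • 1))) 1
    rw [hBD] at hd
    simp only [one_smul] at hd
    rw [← hBneg, hd]
    -- now bound the Duhamel integral
    have hScont : Continuous fun s : ℝ =>
        NormedSpace.exp (s • (-Am + -(α • Qm p q))) :=
      exp_continuous.comp (continuous_id.smul continuous_const)
    have hEcont : Continuous fun s : ℝ =>
        NormedSpace.exp ((1 - s) • -(fromBlocks A11 0 0 (A22 + α • 1))) * (-Nm) *
          NormedSpace.exp (s • (-Am + -(α • Qm p q))) :=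
      ((exp_continuous.comp
        ((continuous_const.sub continuous_id).smul continuous_const)).mul
          continuous_const).mul hScont
    have hsB : ∀ s ∈ Icc (0:ℝ) 1,
        ‖NormedSpace.exp (s • (-Am + -(α • Qm p q)))‖ ≤ M0 := fun s hs =>
      norm_exp_perturb_le Am hα0.le hs
    have hQS : ∀ s ∈ Icc (0:ℝ) 1,
        ‖Qm p q * NormedSpace.exp (s • (-Am + -(α • Qm p q)))‖ ≤
          Real.exp (-(s * α)) + CB / α := fun s hs =>
      norm_Qm_mul_exp_le Am hα0 hs
    have hpt : ∀ s ∈ Icc (0:ℝ) 1,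
        ‖NormedSpace.exp ((1 - s) • -(fromBlocks A11 0 0 (A22 + α • 1))) * (-Nm) *
          NormedSpace.exp (s • (-Am + -(α • Qm p q)))‖ ≤
        MD * ‖Nm‖ * (Real.exp (-(s * α)) + CB / α) +
          Real.exp (-((1 - s) * α)) * (Real.exp ‖A22‖ * (‖Nm‖ * M0)) := by
      rintro s ⟨hs0, hs1⟩
      set T : Matrix (Fin p ⊕ Fin q) (Fin p ⊕ Fin q) ℝ :=
        NormedSpace.exp ((1 - s) • -(fromBlocks A11 0 0 (A22 + α • 1))) with hT
      set Ss : Matrix (Fin p ⊕ Fin q) (Fin p ⊕ Fin q) ℝ :=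
        NormedSpace.exp (s • (-Am + -(α • Qm p q))) with hSs
      have hTeq : T = fromBlocks (NormedSpace.exp ((1 - s) • -A11)) 0 0
          (Real.exp (-((1 - s) * α)) • NormedSpace.exp ((1 - s) • -A22)) := by
        rw [hT]
        exact exp_smul_neg_D A11 A22 α (1 - s)
      have hTn : ‖T‖ ≤ MD := by
        rw [hTeq]
        refine (norm_fromBlocks_le _ _ _ _).trans (max_le ?_ ?_)
        · rw [norm_zero, add_zero]
          refine (norm_exp_smul_neg_le A11 (by linarith) (by linarith)).trans ?_
          rw [hMD]
          nlinarith [Real.exp_pos ‖A22‖]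
        · rw [norm_zero, zero_add, norm_smul, Real.norm_eq_abs,
            abs_of_pos (Real.exp_pos _)]
          have h1 : Real.exp (-((1 - s) * α)) ≤ 1 := Real.exp_le_one_iff.2 (by nlinarith)
          have h2 := norm_exp_smul_neg_le A22 (t := 1 - s) (by linarith) (by linarith)
          rw [hMD]
          nlinarith [Real.exp_pos ‖A11‖, norm_nonneg (NormedSpace.exp ((1 - s) • -A22)),
            Real.exp_pos ‖A22‖]
      have hTQ : ‖T * Qm p q‖ ≤ Real.exp (-((1 - s) * α)) * Real.exp ‖A22‖ := by
        have e : T * Qm p q = fromBlocks 0 0 0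
            (Real.exp (-((1 - s) * α)) • NormedSpace.exp ((1 - s) • -A22)) := by
          rw [hTeq, Qm, Matrix.fromBlocks_multiply]
          simp
        rw [e]
        refine (norm_fromBlocks_le _ _ _ _).trans
          (max_le (by simp; positivity) ?_)
        rw [norm_zero, zero_add, norm_smul, Real.norm_eq_abs, abs_of_pos (Real.exp_pos _)]
        exact mul_le_mul_of_nonneg_left
          (norm_exp_smul_neg_le A22 (by linarith) (by linarith)) (Real.exp_pos _).le
      have hrw : T * (-Nm) * Ss = -(T * (Nm * Qm p q) * Ss + T * (Qm p q * Nm) * Ss) := by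
        conv_lhs => rw [← hNsp]
        noncomm_ring
      rw [hrw, norm_neg]
      refine (norm_add_le _ _).trans (add_le_add ?_ ?_)
      · have e1 : T * (Nm * Qm p q) * Ss = T * Nm * (Qm p q * Ss) := by noncomm_ring
        rw [e1]
        calc ‖T * Nm * (Qm p q * Ss)‖ ≤ ‖T * Nm‖ * ‖Qm p q * Ss‖ := norm_mul_le _ _
        _ ≤ MD * ‖Nm‖ * (Real.exp (-(s * α)) + CB / α) := by
            refine mul_le_mul ?_ (hQS s ⟨hs0, hs1⟩) (norm_nonneg _) (by positivity)
            exact (norm_mul_le _ _).trans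
              (mul_le_mul_of_nonneg_right hTn (norm_nonneg _))
      · have e2 : T * (Qm p q * Nm) * Ss = T * Qm p q * (Nm * Ss) := by noncomm_ring
        rw [e2]
        calc ‖T * Qm p q * (Nm * Ss)‖ ≤ ‖T * Qm p q‖ * ‖Nm * Ss‖ := norm_mul_le _ _
        _ ≤ Real.exp (-((1 - s) * α)) * Real.exp ‖A22‖ * (‖Nm‖ * M0) := by
            refine mul_le_mul hTQ ?_ (norm_nonneg _) (by positivity)
            exact (norm_mul_le _ _).trans
              (mul_le_mul_of_nonneg_left (hsB s ⟨hs0, hs1⟩) (norm_nonneg _))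
        _ = Real.exp (-((1 - s) * α)) * (Real.exp ‖A22‖ * (‖Nm‖ * M0)) := by ring
    -- integrate the pointwise bound
    have hbcont : Continuous fun s : ℝ =>
        MD * ‖Nm‖ * (Real.exp (-(s * α)) + CB / α) +
          Real.exp (-((1 - s) * α)) * (Real.exp ‖A22‖ * (‖Nm‖ * M0)) := by
      refine Continuous.add ?_ ?_
      · exact continuous_const.mul
          ((Real.continuous_exp.comp ((continuous_id.mul continuous_const).neg)).add
            continuous_const)
      · exact (Real.continuous_exp.comp
          (((continuous_const.sub continuous_id).mul continuous_const).neg)).mul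
          continuous_const
    refine (intervalIntegral.norm_integral_le_integral_norm zero_le_one).trans ?_
    have hint1 : IntervalIntegrable
        (fun s => ‖NormedSpace.exp ((1 - s) • -(fromBlocks A11 0 0 (A22 + α • 1))) * (-Nm) *
          NormedSpace.exp (s • (-Am + -(α • Qm p q)))‖) MeasureTheory.volume 0 1 :=
      hEcont.norm.intervalIntegrable 0 1
    have hint2 : IntervalIntegrable
        (fun s : ℝ => MD * ‖Nm‖ * (Real.exp (-(s * α)) + CB / α) +
          Real.exp (-((1 - s) * α)) * (Real.exp ‖A22‖ * (‖Nm‖ * M0)))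
        MeasureTheory.volume 0 1 := hbcont.intervalIntegrable 0 1
    refine (intervalIntegral.integral_mono_on zero_le_one hint1 hint2 hpt).trans ?_
    have hint3 : IntervalIntegrable
        (fun s : ℝ => MD * ‖Nm‖ * (Real.exp (-(s * α)) + CB / α))
        MeasureTheory.volume 0 1 := by
      refine Continuous.intervalIntegrable ?_ 0 1
      exact continuous_const.mul
        ((Real.continuous_exp.comp ((continuous_id.mul continuous_const).neg)).add
          continuous_const)
    have hint4 : IntervalIntegrable
        (fun s : ℝ => Real.exp (-((1 - s) * α)) * (Real.exp ‖A22‖ * (‖Nm‖ * M0)))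
        MeasureTheory.volume 0 1 := by
      refine Continuous.intervalIntegrable ?_ 0 1
      exact (Real.continuous_exp.comp
        (((continuous_const.sub continuous_id).mul continuous_const).neg)).mul
        continuous_const
    rw [intervalIntegral.integral_add hint3 hint4,
      intervalIntegral.integral_const_mul, intervalIntegral.integral_mul_const]
    have hint5 : IntervalIntegrable (fun s : ℝ => Real.exp (-(s * α)))
        MeasureTheory.volume 0 1 := by
      refine Continuous.intervalIntegrable ?_ 0 1
      exact Real.continuous_exp.comp ((continuous_id.mul continuous_const).neg)
    have hi1 : (∫ s in (0:ℝ)..1, (Real.exp (-(s * α)) + CB / α)) ≤ 1 / α + CB / α := by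
      rw [intervalIntegral.integral_add hint5
        (intervalIntegrable_const (μ := MeasureTheory.volume))]
      have := integral_exp_decay_le hα0
      simp only [intervalIntegral.integral_const, sub_zero, one_smul, smul_eq_mul]
      linarith
    have hi2 : (∫ s in (0:ℝ)..1, Real.exp (-((1 - s) * α))) ≤ 1 / α :=
      integral_exp_kernel_le hα0 zero_le_one
    have hnn : (0:ℝ) ≤ Real.exp ‖A22‖ * (‖Nm‖ * M0) := by positivity
    calc MD * ‖Nm‖ * (∫ s in (0:ℝ)..1, (Real.exp (-(s * α)) + CB / α)) +
          (∫ s in (0:ℝ)..1, Real.exp (-((1 - s) * α))) * (Real.exp ‖A22‖ * (‖Nm‖ * M0))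
        ≤ MD * ‖Nm‖ * (1 / α + CB / α) + (1 / α) * (Real.exp ‖A22‖ * (‖Nm‖ * M0)) := by
          refine add_le_add ?_ (mul_le_mul_of_nonneg_right hi2 hnn)
          exact mul_le_mul_of_nonneg_left hi1 (by positivity)
    _ = C / α := by
          rw [hC]
          field_simp
  -- limit of the block-diagonal part
  have hDeq : ∀ α : ℝ, NormedSpace.exp (-(fromBlocks A11 0 0 (A22 + α • 1))) =
      fromBlocks (NormedSpace.exp (-A11)) 0 0
        (Real.exp (-α) • NormedSpace.exp (-A22)) := by
    intro α
    have h := exp_smul_neg_D A11 A22 α 1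
    simpa only [one_smul, one_mul] using h
  have hDlim : Tendsto (fun α : ℝ =>
      NormedSpace.exp (-(fromBlocks A11 0 0 (A22 + α • 1)))) atTop
      (nhds (fromBlocks (NormedSpace.exp (-A11)) 0 0 0)) := by
    simp only [hDeq]
    have h3 : Tendsto (fun α : ℝ => Real.exp (-α)) atTop (nhds 0) :=
      Real.tendsto_exp_neg_atTop_nhds_zero
    have h2 : Tendsto (fun α : ℝ => Real.exp (-α) • NormedSpace.exp (-A22)) atTop
        (nhds (0 : Matrix (Fin q) (Fin q) ℝ)) := by
      have := h3.smul_const (NormedSpace.exp (-A22))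
      simpa using this
    have h4 : Continuous fun Yb : Matrix (Fin q) (Fin q) ℝ =>
        fromBlocks (NormedSpace.exp (-A11)) 0 0 Yb :=
      Continuous.matrix_fromBlocks continuous_const continuous_const continuous_const
        continuous_id
    have h5 := (h4.tendsto 0).comp h2
    exact h5
  -- conclusion
  have hzero : Tendsto (fun α : ℝ =>
      NormedSpace.exp (-(fromBlocks A11 A12 A21 (A22 + α • 1))) -
        NormedSpace.exp (-(fromBlocks A11 0 0 (A22 + α • 1)))) atTop (nhds 0) := by
    refine squeeze_zero_norm' (a := fun α : ℝ => C / α) ?_ ?_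
    · filter_upwards [eventually_ge_atTop (1:ℝ)] with α hα
      exact hdiff α hα
    · have : Tendsto (fun α : ℝ => C / α) atTop (nhds 0) :=
        Filter.Tendsto.div_atTop tendsto_const_nhds tendsto_id
      exact this
  have hfinal := hzero.add hDlim
  simp only [zero_add] at hfinal
  refine hfinal.congr fun α => ?_
  abel

end Main

end ExpBlockAux

/-- **Exponential of block perturbation.**
For `α ≥ 0`, let `A_α = [[A₁₁, A₁₂],[A₂₁, A₂₂ + αI]]`.  Then as `α → ∞`,
`e^{-A_α}` converges to the block matrix `[[e^{-A₁₁}, 0],[0, 0]]`. -/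
theorem exp_block_perturbation_tendsto {p q : ℕ}
    (A11 : Matrix (Fin p) (Fin p) ℝ) (A12 : Matrix (Fin p) (Fin q) ℝ)
    (A21 : Matrix (Fin q) (Fin p) ℝ) (A22 : Matrix (Fin q) (Fin q) ℝ) :
    Tendsto
      (fun α : ℝ =>
        NormedSpace.exp (-(Matrix.fromBlocks A11 A12 A21 (A22 + α • 1))))
      atTop
      (nhds (Matrix.fromBlocks (NormedSpace.exp (-A11)) 0 0 0)) := by
  exact ExpBlockAux.master A11 A12 A21 A22
end

section
/- Suppose A is a k×k real matrix whose eigenvalues all have strictly positive real part, and U is an n×k real matrix with orthonormal columns. Then for any closed contour C in the open right half-plane enclosing all eigenvalues of A^{-1}, one has U e^{-A} U^T = (2πi)^{-1} ∮_C e^{-1/z} (zI - U A^{-1} U^T)^{-1} dz. -/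
open Matrix

attribute [local instance] Matrix.normedAddCommGroup Matrix.normedSpace

open Metric Set Complex Polynomial NormedSpace

noncomputable section ContourAux

variable {k : ℕ}

/-- Interchange a continuous linear map with a circle integral. -/
theorem clm_circleIntegral {E F : Type*} [NormedAddCommGroup E] [NormedSpace ℂ E]
    [NormedAddCommGroup F] [NormedSpace ℂ F] [CompleteSpace E] [CompleteSpace F]
    (L : E →L[ℂ] F) {f : ℂ → E} {c : ℂ} {r : ℝ} (hf : CircleIntegrable f c r) :
    (∮ z in C(c, r), L (f z)) = L (∮ z in C(c, r), f z) := by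
  rw [circleIntegral, circleIntegral, ← L.intervalIntegral_comp_comm hf.out]
  congr 1
  ext θ
  rw [L.map_smul]

theorem matrix_norm_mul_le {k l m : ℕ} (M : Matrix (Fin k) (Fin l) ℂ)
    (N : Matrix (Fin l) (Fin m) ℂ) : ‖M * N‖ ≤ l * ‖M‖ * ‖N‖ := by
  rcases le_or_gt (l:ℝ) 0 with hl | hl
  · have hl0 : l = 0 := by exact_mod_cast le_antisymm (by exact_mod_cast hl) (Nat.cast_nonneg l)
    subst hl0
    simp [Matrix.mul_apply, Matrix.norm_le_iff (le_refl (0:ℝ))]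
  · rw [show (l:ℝ) * ‖M‖ * ‖N‖ = l * (‖M‖ * ‖N‖) by ring]
    refine (Matrix.norm_le_iff (by positivity)).2 fun i j => ?_
    calc ‖(M * N) i j‖ = ‖∑ t, M i t * N t j‖ := by rw [Matrix.mul_apply]
    _ ≤ ∑ t, ‖M i t * N t j‖ := norm_sum_le _ _
    _ ≤ ∑ _t : Fin l, ‖M‖ * ‖N‖ := by
        refine Finset.sum_le_sum fun t _ => ?_
        rw [norm_mul]
        exact mul_le_mul (Matrix.norm_entry_le_entrywise_sup_norm M)
          (Matrix.norm_entry_le_entrywise_sup_norm N) (norm_nonneg _) (norm_nonneg _)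
    _ = l * (‖M‖ * ‖N‖) := by simp [Finset.sum_const, nsmul_eq_mul]

theorem matrix_norm_one_le : ‖(1 : Matrix (Fin k) (Fin k) ℂ)‖ ≤ 1 := by
  refine (Matrix.norm_le_iff zero_le_one).2 fun i j => ?_
  rcases eq_or_ne i j with h | h <;> simp [Matrix.one_apply, h]

theorem eval_charpoly' (B : Matrix (Fin k) (Fin k) ℂ) (z : ℂ) :
    ((charmatrix B).map (Polynomial.eval z)) = z • (1 : Matrix (Fin k) (Fin k) ℂ) - B := by
  ext i j
  rcases eq_or_ne i j with h | h
  · subst h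
    simp [charmatrix_apply_eq, Matrix.one_apply, Matrix.sub_apply, Matrix.smul_apply]
  · simp [charmatrix_apply_ne _ _ _ h, Matrix.one_apply_ne h, Matrix.sub_apply,
      Matrix.smul_apply, h]

theorem res_eq (B : Matrix (Fin k) (Fin k) ℂ) (z : ℂ) :
    (z • (1 : Matrix (Fin k) (Fin k) ℂ) - B)⁻¹ =
      (Polynomial.eval z B.charpoly)⁻¹ • ((charmatrix B).adjugate.map (Polynomial.eval z)) := by
  have h1 : ((charmatrix B).map (Polynomial.eval z)) = z • (1 : Matrix (Fin k) (Fin k) ℂ) - B :=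
    eval_charpoly' B z
  have hdet : Polynomial.eval z B.charpoly = (z • (1 : Matrix (Fin k) (Fin k) ℂ) - B).det := by
    rw [Matrix.charpoly, ← h1]
    have := RingHom.map_det (Polynomial.evalRingHom z) (charmatrix B)
    simpa [RingHom.mapMatrix_apply] using this
  have hadj : (z • (1 : Matrix (Fin k) (Fin k) ℂ) - B).adjugate
      = (charmatrix B).adjugate.map (Polynomial.eval z) := by
    rw [← h1]
    have := RingHom.map_adjugate (Polynomial.evalRingHom z) (charmatrix B)
    simpa [RingHom.mapMatrix_apply] using this.symm
  rw [Matrix.inv_def, hadj, hdet, Ring.inverse_eq_inv']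

theorem res_differentiableAt (B : Matrix (Fin k) (Fin k) ℂ) {z : ℂ}
    (h : IsUnit (z • (1 : Matrix (Fin k) (Fin k) ℂ) - B).det) :
    DifferentiableAt ℂ (fun w => (w • (1 : Matrix (Fin k) (Fin k) ℂ) - B)⁻¹) z := by
  have hfun : (fun w => (w • (1 : Matrix (Fin k) (Fin k) ℂ) - B)⁻¹)
      = fun w => (Polynomial.eval w B.charpoly)⁻¹ •
          ((charmatrix B).adjugate.map (Polynomial.eval w)) := funext fun w => res_eq B w
  have hdet : Polynomial.eval z B.charpoly ≠ 0 := by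
    have h1 := eval_charpoly' B z
    have : Polynomial.eval z B.charpoly = (z • (1 : Matrix (Fin k) (Fin k) ℂ) - B).det := by
      rw [Matrix.charpoly, ← h1]
      have := RingHom.map_det (Polynomial.evalRingHom z) (charmatrix B)
      simpa [RingHom.mapMatrix_apply] using this
    rw [this]
    exact h.ne_zero
  rw [hfun]
  have hmat : ∀ w : ℂ, ((charmatrix B).adjugate.map (Polynomial.eval w))
      = ∑ i : Fin k, ∑ j : Fin k,
          (Polynomial.eval w ((charmatrix B).adjugate i j)) • Matrix.single i j (1 : ℂ) := by
    intro w
    conv_lhs => rw [matrix_eq_sum_single ((charmatrix B).adjugate.map (Polynomial.eval w))]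
    refine Finset.sum_congr rfl fun i _ => Finset.sum_congr rfl fun j _ => ?_
    rw [smul_single, smul_eq_mul, mul_one, Matrix.map_apply]
  have hd2 : DifferentiableAt ℂ
      (fun w => ((charmatrix B).adjugate.map (Polynomial.eval w))) z := by
    simp only [hmat]
    refine DifferentiableAt.fun_sum fun i _ => DifferentiableAt.fun_sum fun j _ => ?_
    exact ((charmatrix B).adjugate i j).differentiableAt.smul_const _
  exact ((B.charpoly.differentiableAt.inv hdet)).smul hd2

theorem res_identity (B : Matrix (Fin k) (Fin k) ℂ) {z c : ℂ}
    (h : IsUnit (z • (1 : Matrix (Fin k) (Fin k) ℂ) - B).det) (hz : z ≠ c) :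
    (z • (1 : Matrix (Fin k) (Fin k) ℂ) - B)⁻¹ =
      (z - c)⁻¹ • (1 + (z • (1 : Matrix (Fin k) (Fin k) ℂ) - B)⁻¹ * (B - c • 1)) := by
  refine Matrix.inv_eq_right_inv ?_
  have hS : (z • (1 : Matrix (Fin k) (Fin k) ℂ) - B) * (z • 1 - B)⁻¹ = 1 :=
    Matrix.mul_nonsing_inv _ h
  have hsum : (z • (1 : Matrix (Fin k) (Fin k) ℂ) - B) + (B - c • 1) = (z - c) • 1 := by
    rw [sub_smul]; abel
  calc (z • (1 : Matrix (Fin k) (Fin k) ℂ) - B) *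
      ((z - c)⁻¹ • (1 + (z • 1 - B)⁻¹ * (B - c • 1)))
      = (z - c)⁻¹ • ((z • (1 : Matrix (Fin k) (Fin k) ℂ) - B)
          + (z • 1 - B) * ((z • 1 - B)⁻¹ * (B - c • 1))) := by
        rw [Matrix.mul_smul, mul_add, mul_one]
    _ = (z - c)⁻¹ • ((z • (1 : Matrix (Fin k) (Fin k) ℂ) - B) + (B - c • 1)) := by
        rw [← Matrix.mul_assoc, hS, Matrix.one_mul]
    _ = (z - c)⁻¹ • ((z - c) • (1 : Matrix (Fin k) (Fin k) ℂ)) := by rw [hsum]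
    _ = 1 := by rw [smul_smul, inv_mul_cancel₀ (sub_ne_zero.mpr hz), one_smul]

theorem J0 (B : Matrix (Fin k) (Fin k) ℂ) {c : ℂ} {r : ℝ} (hr : 0 < r)
    (hunit : ∀ z : ℂ, z ∉ ball c r → IsUnit (z • (1 : Matrix (Fin k) (Fin k) ℂ) - B).det) :
    (∮ z in C(c, r), (z • (1 : Matrix (Fin k) (Fin k) ℂ) - B)⁻¹) =
      (2 * Real.pi * Complex.I : ℂ) • 1 := by
  haveI : Subsingleton (Matrix (Fin 0) (Fin 0) ℂ) :=
    ⟨fun a b => Matrix.ext fun i _ => i.elim0⟩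
  rcases Nat.eq_zero_or_pos k with hk | _hk
  · subst hk; exact Subsingleton.elim _ _
  set res : ℂ → Matrix (Fin k) (Fin k) ℂ :=
    fun z => (z • (1 : Matrix (Fin k) (Fin k) ℂ) - B)⁻¹ with hres
  set D : Matrix (Fin k) (Fin k) ℂ := B - c • 1 with hDdef
  set kD : ℝ := (k : ℝ) * ‖D‖ with hkDdef
  have hkD0 : 0 ≤ kD := by positivity
  have hdiff : ∀ z : ℂ, z ∉ ball c r → DifferentiableAt ℂ res z :=
    fun z hz => res_differentiableAt B (hunit z hz)
  set X : Matrix (Fin k) (Fin k) ℂ :=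
    (∮ z in C(c, r), res z) - (2 * Real.pi * Complex.I : ℂ) • 1 with hX
  have main : ∀ R : ℝ, max r (2 * kD + 1) ≤ R → ‖X‖ ≤ 4 * Real.pi * kD / R := by
    intro R hR
    have hRr : r ≤ R := le_trans (le_max_left _ _) hR
    have hRkD : 2 * kD + 1 ≤ R := le_trans (le_max_right _ _) hR
    have hRpos : 0 < R := lt_of_lt_of_le (by linarith) hRkD
    have hsph_not_ball : ∀ z ∈ sphere c R, z ∉ ball c r := by
      intro z hz hb
      rw [mem_sphere] at hz
      rw [mem_ball] at hb
      linarith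
    have hcont_res : ∀ z ∈ sphere c R, ContinuousWithinAt res (sphere c R) z :=
      fun z hz => ((hdiff z (hsph_not_ball z hz)).continuousAt).continuousWithinAt
    -- Step 1 : deformation of the contour
    have step1 : (∮ z in C(c, R), res z) = ∮ z in C(c, r), res z := by
      refine circleIntegral_eq_of_differentiable_on_annulus_off_countable hr hRr
        countable_empty (fun z hz => ?_) (fun z hz => ?_)
      · exact ((hdiff z hz.2).continuousAt).continuousWithinAt
      · exact hdiff z fun hb => hz.1.2 (ball_subset_closedBall hb)
    -- the identity on the sphere of radius R
    have hid : ∀ z ∈ sphere c R, res z = (z - c)⁻¹ • (1 + res z * D) := by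
      intro z hz
      have hzc : z ≠ c := by
        intro h; rw [mem_sphere, h, dist_self] at hz; exact hRpos.ne hz
      exact res_identity B (hunit z (hsph_not_ball z hz)) hzc
    -- the uniform bound on the resolvent on the sphere of radius R
    have hresbd : ∀ z ∈ sphere c R, ‖res z‖ ≤ 2 / R := by
      intro z hz
      have hzc : ‖(z - c)⁻¹‖ = R⁻¹ := by
        rw [norm_inv]
        rw [mem_sphere, dist_eq_norm] at hz
        rw [hz]
      have hx : ‖res z‖ ≤ R⁻¹ * (1 + ‖res z‖ * kD) := by
        calc ‖res z‖ = ‖(z - c)⁻¹ • (1 + res z * D)‖ := by rw [← hid z hz]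
          _ = ‖(z - c)⁻¹‖ * ‖1 + res z * D‖ := norm_smul _ _
          _ ≤ R⁻¹ * (1 + ‖res z‖ * kD) := by
              rw [hzc]
              refine mul_le_mul_of_nonneg_left ?_ (by positivity)
              calc ‖(1 : Matrix (Fin k) (Fin k) ℂ) + res z * D‖
                  ≤ ‖(1 : Matrix (Fin k) (Fin k) ℂ)‖ + ‖res z * D‖ := norm_add_le _ _
                _ ≤ 1 + ‖res z‖ * kD := by
                    have h1 := matrix_norm_one_le (k := k)
                    have h2 := matrix_norm_mul_le (res z) D
                    have : (k : ℝ) * ‖res z‖ * ‖D‖ = ‖res z‖ * kD := by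
                      rw [hkDdef]; ring
                    linarith
      have hx0 : 0 ≤ ‖res z‖ := norm_nonneg _
      rw [le_div_iff₀ hRpos]
      have hx' : ‖res z‖ * R ≤ 1 + ‖res z‖ * kD := by
        have h2 := mul_le_mul_of_nonneg_right hx hRpos.le
        calc ‖res z‖ * R ≤ R⁻¹ * (1 + ‖res z‖ * kD) * R := h2
          _ = (1 + ‖res z‖ * kD) * (R⁻¹ * R) := by ring
          _ = 1 + ‖res z‖ * kD := by rw [inv_mul_cancel₀ hRpos.ne', mul_one]
      nlinarith [mul_nonneg hx0 hkD0]
    -- split the integral over the big circle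
    have h1int : CircleIntegrable
        (fun z => (z - c)⁻¹ • (1 : Matrix (Fin k) (Fin k) ℂ)) c R := by
      refine ContinuousOn.circleIntegrable hRpos.le ?_
      intro z hz
      have hzc : z - c ≠ 0 := by
        intro h
        rw [mem_sphere, dist_eq_norm, h, norm_zero] at hz
        exact hRpos.ne' hz.symm
      exact (((continuousWithinAt_id.sub continuousWithinAt_const).inv₀ hzc).smul
        continuousWithinAt_const)
    have h2int : CircleIntegrable (fun z => (z - c)⁻¹ • (res z * D)) c R := by
      refine ContinuousOn.circleIntegrable hRpos.le ?_
      intro z hz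
      have hzc : z - c ≠ 0 := by
        intro h
        rw [mem_sphere, dist_eq_norm, h, norm_zero] at hz
        exact hRpos.ne' hz.symm
      exact ((continuousWithinAt_id.sub continuousWithinAt_const).inv₀ hzc).smul
        ((hcont_res z hz).mul continuousWithinAt_const)
    have hresint : CircleIntegrable res c R :=
      ContinuousOn.circleIntegrable hRpos.le hcont_res
    have step2 : (∮ z in C(c, R), res z) - (∮ z in C(c, R), (z - c)⁻¹ • (res z * D)) =
        ∮ z in C(c, R), (z - c)⁻¹ • (1 : Matrix (Fin k) (Fin k) ℂ) := by
      rw [← circleIntegral.integral_sub hresint h2int]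
      refine circleIntegral.integral_congr hRpos.le fun z hz => ?_
      show res z - (z - c)⁻¹ • (res z * D) = (z - c)⁻¹ • (1 : Matrix (Fin k) (Fin k) ℂ)
      nth_rewrite 1 [hid z hz]
      rw [smul_add]
      abel
    have step3 : (∮ z in C(c, R), (z - c)⁻¹ • (1 : Matrix (Fin k) (Fin k) ℂ))
        = (2 * Real.pi * Complex.I : ℂ) • 1 := by
      rw [circleIntegral.integral_smul_const,
        circleIntegral.integral_sub_inv_of_mem_ball (mem_ball_self hRpos)]
    have step4 : ‖∮ z in C(c, R), (z - c)⁻¹ • (res z * D)‖ ≤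
        2 * Real.pi * R * (R⁻¹ * (2 / R * kD)) := by
      refine circleIntegral.norm_integral_le_of_norm_le_const hRpos.le fun z hz => ?_
      have hzc : ‖(z - c)⁻¹‖ = R⁻¹ := by
        rw [norm_inv]
        rw [mem_sphere, dist_eq_norm] at hz
        rw [hz]
      rw [norm_smul, hzc]
      refine mul_le_mul_of_nonneg_left ?_ (by positivity)
      calc ‖res z * D‖ ≤ (k : ℝ) * ‖res z‖ * ‖D‖ := matrix_norm_mul_le _ _
        _ ≤ (k : ℝ) * (2 / R) * ‖D‖ := by
            have := hresbd z hz
            have hk0 : (0:ℝ) ≤ (k:ℝ) := Nat.cast_nonneg _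
            have hD0 : (0:ℝ) ≤ ‖D‖ := norm_nonneg _
            nlinarith
        _ = 2 / R * kD := by rw [hkDdef]; ring
    have hXR : X = ∮ z in C(c, R), (z - c)⁻¹ • (res z * D) := by
      rw [hX, ← step1, ← step3, ← step2]; abel
    rw [hXR]
    calc ‖∮ z in C(c, R), (z - c)⁻¹ • (res z * D)‖
        ≤ 2 * Real.pi * R * (R⁻¹ * (2 / R * kD)) := step4
      _ = 4 * Real.pi * kD / R := by
          field_simp
          ring
  have hlim : Filter.Tendsto (fun R : ℝ => 4 * Real.pi * kD / R) Filter.atTop (nhds 0) :=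
    Filter.Tendsto.div_atTop tendsto_const_nhds Filter.tendsto_id
  have hXnorm : ‖X‖ ≤ 0 :=
    ge_of_tendsto hlim (Filter.eventually_atTop.2 ⟨max r (2 * kD + 1), main⟩)
  have : X = 0 := norm_le_zero_iff.mp hXnorm
  rw [hX] at this
  exact sub_eq_zero.mp this

theorem Jm (B : Matrix (Fin k) (Fin k) ℂ) {c : ℂ} {r : ℝ} (hr : 0 < r)
    (hBdet : IsUnit B.det) (h0 : (0 : ℂ) ∉ closedBall c r)
    (hunit : ∀ z : ℂ, z ∉ ball c r → IsUnit (z • (1 : Matrix (Fin k) (Fin k) ℂ) - B).det)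
    (m : ℕ) :
    (∮ z in C(c, r), (z ^ m)⁻¹ • (z • (1 : Matrix (Fin k) (Fin k) ℂ) - B)⁻¹) =
      (2 * Real.pi * Complex.I : ℂ) • (B⁻¹) ^ m := by
  have hz0 : ∀ z ∈ sphere c r, z ≠ 0 := by
    intro z hz h
    exact h0 (h ▸ sphere_subset_closedBall hz)
  have hsph_not_ball : ∀ z ∈ sphere c r, z ∉ ball c r := by
    intro z hz hb
    rw [mem_sphere] at hz
    rw [mem_ball] at hb
    exact hb.ne hz
  have hcontres : ContinuousOn (fun z : ℂ => (z • (1 : Matrix (Fin k) (Fin k) ℂ) - B)⁻¹)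
      (sphere c r) := fun z hz =>
    ((res_differentiableAt B (hunit z (hsph_not_ball z hz))).continuousAt).continuousWithinAt
  induction m with
  | zero =>
      simp only [pow_zero, inv_one, one_smul]
      exact J0 B hr hunit
  | succ m ih =>
      set res : ℂ → Matrix (Fin k) (Fin k) ℂ :=
        fun z => (z • (1 : Matrix (Fin k) (Fin k) ℂ) - B)⁻¹ with hresdef
      -- pointwise identity
      have hpt : ∀ z ∈ sphere c r, (z ^ (m + 1))⁻¹ • res z
          = ((z ^ m)⁻¹ • res z) * B⁻¹ - (z ^ (m + 1))⁻¹ • B⁻¹ := by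
        intro z hz
        have hzne := hz0 z hz
        have hS : res z * (z • (1 : Matrix (Fin k) (Fin k) ℂ) - B) = 1 :=
          Matrix.nonsing_inv_mul _ (hunit z (hsph_not_ball z hz))
        have key : res z - z⁻¹ • 1 = z⁻¹ • (res z * B) := by
          have h1 : z⁻¹ • (1 : Matrix (Fin k) (Fin k) ℂ)
              = res z * (z⁻¹ • (z • (1 : Matrix (Fin k) (Fin k) ℂ) - B)) := by
            rw [Matrix.mul_smul, hS]
          have hexp : z⁻¹ • (z • (1 : Matrix (Fin k) (Fin k) ℂ) - B)
              = 1 - z⁻¹ • B := by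
            rw [smul_sub, smul_smul, inv_mul_cancel₀ hzne, one_smul]
          rw [h1, hexp, mul_sub, mul_one, Matrix.mul_smul]
          abel
        have key2 : z⁻¹ • res z = (res z - z⁻¹ • 1) * B⁻¹ := by
          rw [key, smul_mul_assoc, Matrix.mul_assoc, Matrix.mul_nonsing_inv _ hBdet,
            Matrix.mul_one]
        calc (z ^ (m + 1))⁻¹ • res z = ((z ^ m)⁻¹ * z⁻¹) • res z := by
              rw [pow_succ, mul_inv]
          _ = (z ^ m)⁻¹ • (z⁻¹ • res z) := by rw [smul_smul]
          _ = (z ^ m)⁻¹ • ((res z - z⁻¹ • 1) * B⁻¹) := by rw [key2]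
          _ = ((z ^ m)⁻¹ • (res z - z⁻¹ • 1)) * B⁻¹ := by rw [smul_mul_assoc]
          _ = ((z ^ m)⁻¹ • res z - ((z ^ m)⁻¹ * z⁻¹) • 1) * B⁻¹ := by
              rw [smul_sub, smul_smul]
          _ = ((z ^ m)⁻¹ • res z) * B⁻¹ - (z ^ (m + 1))⁻¹ • B⁻¹ := by
              rw [sub_mul, smul_mul_assoc, smul_mul_assoc, Matrix.one_mul, pow_succ, mul_inv]
      -- integrability
      have hint0 : CircleIntegrable (fun z : ℂ => (z ^ m)⁻¹ • res z) c r := by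
        refine ContinuousOn.circleIntegrable hr.le fun z hz => ?_
        exact (((continuousWithinAt_id.pow m).inv₀ (pow_ne_zero _ (hz0 z hz))).smul
          (hcontres z hz))
      have hint1 : CircleIntegrable (fun z : ℂ => ((z ^ m)⁻¹ • res z) * B⁻¹) c r := by
        refine ContinuousOn.circleIntegrable hr.le fun z hz => ?_
        exact (((continuousWithinAt_id.pow m).inv₀ (pow_ne_zero _ (hz0 z hz))).smul
          (hcontres z hz)).mul continuousWithinAt_const
      have hint2 : CircleIntegrable (fun z : ℂ => (z ^ (m + 1))⁻¹ • B⁻¹) c r := by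
        refine ContinuousOn.circleIntegrable hr.le fun z hz => ?_
        exact ((continuousWithinAt_id.pow (m + 1)).inv₀
          (pow_ne_zero _ (hz0 z hz))).smul continuousWithinAt_const
      -- the scalar integral of z⁻^(m+1) vanishes
      have hzero : (∮ z in C(c, r), (z ^ (m + 1))⁻¹) = 0 := by
        refine circleIntegral_eq_zero_of_differentiable_on_off_countable hr.le
          countable_empty (fun z hz => ?_) (fun z hz => ?_)
        · have hzne : z ≠ 0 := fun h => h0 (h ▸ hz)
          exact (((continuousWithinAt_id.pow (m + 1)).inv₀ (pow_ne_zero _ hzne)))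
        · have hzne : z ≠ 0 := fun h => h0 (h ▸ ball_subset_closedBall hz.1)
          exact (differentiableAt_id.pow (m + 1)).inv (pow_ne_zero _ hzne)
      -- the continuous linear map given by right multiplication with B⁻¹
      let L : Matrix (Fin k) (Fin k) ℂ →L[ℂ] Matrix (Fin k) (Fin k) ℂ :=
        LinearMap.toContinuousLinearMap (LinearMap.mulRight ℂ B⁻¹)
      have hL : ∀ M : Matrix (Fin k) (Fin k) ℂ, L M = M * B⁻¹ := fun M => rfl
      calc (∮ z in C(c, r), (z ^ (m + 1))⁻¹ • res z)
          = ∮ z in C(c, r), (((z ^ m)⁻¹ • res z) * B⁻¹ - (z ^ (m + 1))⁻¹ • B⁻¹) :=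
            circleIntegral.integral_congr hr.le fun z hz => hpt z hz
        _ = (∮ z in C(c, r), ((z ^ m)⁻¹ • res z) * B⁻¹)
            - ∮ z in C(c, r), (z ^ (m + 1))⁻¹ • B⁻¹ :=
            circleIntegral.integral_sub hint1 hint2
        _ = ((∮ z in C(c, r), (z ^ m)⁻¹ • res z) * B⁻¹)
            - (∮ z in C(c, r), (z ^ (m + 1))⁻¹) • B⁻¹ := by
            rw [circleIntegral.integral_smul_const]
            congr 1
            have := clm_circleIntegral L hint0
            exact this
        _ = (2 * Real.pi * Complex.I : ℂ) • (B⁻¹) ^ (m + 1) := by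
            rw [ih, hzero, zero_smul, sub_zero, smul_mul_assoc, pow_succ]

theorem key_integral (B : Matrix (Fin k) (Fin k) ℂ) {c : ℂ} {r : ℝ} (hr : 0 < r)
    (hBdet : IsUnit B.det) (hcr : r < ‖c‖)
    (hunit : ∀ z : ℂ, z ∉ ball c r → IsUnit (z • (1 : Matrix (Fin k) (Fin k) ℂ) - B).det) :
    (∮ z in C(c, r), Complex.exp (-z⁻¹) • (z • (1 : Matrix (Fin k) (Fin k) ℂ) - B)⁻¹) =
      (2 * Real.pi * Complex.I : ℂ) • NormedSpace.exp (-B⁻¹) := by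
  set res : ℂ → Matrix (Fin k) (Fin k) ℂ :=
    fun z => (z • (1 : Matrix (Fin k) (Fin k) ℂ) - B)⁻¹ with hresdef
  set δ : ℝ := ‖c‖ - r with hδdef
  have hδ : 0 < δ := by rw [hδdef]; linarith
  have hzabs : ∀ z ∈ sphere c r, δ ≤ ‖z‖ := by
    intro z hz
    rw [mem_sphere, Complex.dist_eq] at hz
    have h1 : ‖c‖ ≤ ‖z‖ + ‖c - z‖ := by
      calc ‖c‖ = ‖z + (c - z)‖ := by ring_nf
        _ ≤ ‖z‖ + ‖c - z‖ := norm_add_le _ _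
    have h2 : ‖c - z‖ = r := by rw [← norm_neg, neg_sub]; exact hz
    rw [hδdef]; linarith
  have hzne : ∀ z ∈ sphere c r, z ≠ 0 := by
    intro z hz h
    have := hzabs z hz
    rw [h, norm_zero] at this
    linarith
  have h0 : (0 : ℂ) ∉ closedBall c r := by
    intro h
    rw [mem_closedBall, Complex.dist_eq, zero_sub, norm_neg] at h
    linarith
  have hsph_not_ball : ∀ z ∈ sphere c r, z ∉ ball c r := by
    intro z hz hb
    rw [mem_sphere] at hz
    rw [mem_ball] at hb
    exact hb.ne hz
  have hcontres : ContinuousOn res (sphere c r) := fun z hz =>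
    ((res_differentiableAt B (hunit z (hsph_not_ball z hz))).continuousAt).continuousWithinAt
  obtain ⟨C0, hC0⟩ := (isCompact_sphere c r).exists_bound_of_continuousOn hcontres
  set Cr : ℝ := max C0 0 with hCrdef
  have hCr : ∀ z ∈ sphere c r, ‖res z‖ ≤ Cr := fun z hz =>
    (hC0 z hz).trans (le_max_left _ _)
  have hCr0 : 0 ≤ Cr := le_max_right _ _
  set g : ℕ → ℂ → Matrix (Fin k) (Fin k) ℂ :=
    fun m z => (((m.factorial : ℂ))⁻¹ * (-z⁻¹) ^ m) • res z with hgdef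
  have hgint : ∀ m, CircleIntegrable (g m) c r := by
    intro m
    refine ContinuousOn.circleIntegrable hr.le fun z hz => ?_
    refine ContinuousWithinAt.smul (f := fun z => ((m.factorial : ℂ))⁻¹ * (-z⁻¹) ^ m) (g := res) ?_ (hcontres z hz)
    exact (continuousWithinAt_const.mul
      (((continuousWithinAt_id.inv₀ (hzne z hz)).neg).pow m))
  have hg_hasSum : ∀ z ∈ sphere c r, HasSum (fun m => g m z)
      (Complex.exp (-z⁻¹) • res z) := by
    intro z hz
    have h := NormedSpace.exp_series_hasSum_exp' (𝕂 := ℂ) (-z⁻¹)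
    have h2 := h.smul_const (res z)
    rw [Complex.exp_eq_exp_ℂ]
    simpa only [smul_eq_mul, smul_smul] using h2
  -- dominated convergence for the series of circle integrals
  have hHasSum : HasSum (fun m => ∮ z in C(c, r), g m z)
      (∮ z in C(c, r), Complex.exp (-z⁻¹) • res z) := by
    simp only [circleIntegral]
    refine intervalIntegral.hasSum_integral_of_dominated_convergence
      (fun m _ => r * ((m.factorial : ℝ)⁻¹ * δ⁻¹ ^ m * Cr))
      (fun m => ((hgint m).out).def'.1) (fun m => ?_) ?_ ?_ ?_
    · refine Filter.Eventually.of_forall fun θ _ => ?_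
      have hzsph := circleMap_mem_sphere c hr.le θ
      set z := circleMap c r θ
      have hnd : ‖deriv (circleMap c r) θ‖ = r := by
        simp [deriv_circleMap, abs_of_pos hr]
      rw [norm_smul, hnd]
      refine mul_le_mul_of_nonneg_left ?_ hr.le
      rw [hgdef, norm_smul]
      have h1 : ‖((m.factorial : ℂ))⁻¹ * (-z⁻¹) ^ m‖ ≤ (m.factorial : ℝ)⁻¹ * δ⁻¹ ^ m := by
        rw [norm_mul, norm_inv, norm_pow, norm_neg, norm_inv]
        have hfac : ‖(m.factorial : ℂ)‖ = (m.factorial : ℝ) := by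
          simp [Complex.norm_natCast]
        rw [hfac]
        refine mul_le_mul_of_nonneg_left ?_ (by positivity)
        refine pow_le_pow_left₀ (by positivity) ?_ m
        exact inv_anti₀ hδ (hzabs z hzsph)
      calc ‖((m.factorial : ℂ))⁻¹ * (-z⁻¹) ^ m‖ * ‖res z‖
          ≤ ((m.factorial : ℝ)⁻¹ * δ⁻¹ ^ m) * Cr := by
            refine mul_le_mul h1 (hCr z hzsph) (norm_nonneg _) (by positivity)
        _ = (m.factorial : ℝ)⁻¹ * δ⁻¹ ^ m * Cr := by ring
    · refine Filter.Eventually.of_forall fun θ _ => ?_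
      have hs : Summable (fun m : ℕ => δ⁻¹ ^ m / (m.factorial : ℝ)) :=
        Real.summable_pow_div_factorial δ⁻¹
      refine ((hs.mul_right (r * Cr)).congr (g := fun m : ℕ =>
        r * ((m.factorial : ℝ)⁻¹ * δ⁻¹ ^ m * Cr)) fun m => ?_)
      rw [div_eq_mul_inv]
      ring
    · exact intervalIntegrable_const
    · refine Filter.Eventually.of_forall fun θ _ => ?_
      exact (hg_hasSum (circleMap c r θ) (circleMap_mem_sphere c hr.le θ)).const_smul _
  -- value of each circle integral
  have hgm : ∀ m : ℕ, (∮ z in C(c, r), g m z)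
      = (2 * Real.pi * Complex.I : ℂ) • (((m.factorial : ℂ))⁻¹ • (-B⁻¹) ^ m) := by
    intro m
    have h1 : EqOn (g m)
        (fun z => (((m.factorial : ℂ))⁻¹ * (-1) ^ m) • ((z ^ m)⁻¹ • res z))
        (sphere c r) := by
      intro z hz
      show (((m.factorial : ℂ))⁻¹ * (-z⁻¹) ^ m) • res z
          = (((m.factorial : ℂ))⁻¹ * (-1) ^ m) • ((z ^ m)⁻¹ • res z)
      rw [smul_smul]
      congr 1
      rw [neg_pow, inv_pow]
      ring
    rw [circleIntegral.integral_congr hr.le h1, circleIntegral.integral_smul,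
      Jm B hr hBdet h0 hunit m]
    have h2 : (-B⁻¹ : Matrix (Fin k) (Fin k) ℂ) ^ m = ((-1 : ℂ) ^ m) • (B⁻¹) ^ m := by
      rw [← neg_one_smul ℂ (B⁻¹), _root_.smul_pow]
    rw [h2, smul_smul, smul_smul, smul_smul]
    congr 1
    ring
  simp only [hgm] at hHasSum
  have h4 := hHasSum.const_smul ((2 * Real.pi * Complex.I : ℂ)⁻¹)
  simp only [smul_smul, ← mul_assoc, inv_mul_cancel₀ Complex.two_pi_I_ne_zero, one_mul] at h4
  have h5 : NormedSpace.exp (-B⁻¹)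
      = (2 * Real.pi * Complex.I : ℂ)⁻¹ • ∮ z in C(c, r), Complex.exp (-z⁻¹) • res z := by
    rw [NormedSpace.exp_eq_tsum ℂ]
    exact h4.tsum_eq
  rw [h5, smul_smul, mul_inv_cancel₀ Complex.two_pi_I_ne_zero, one_smul]

theorem exp_map_ofReal (M : Matrix (Fin k) (Fin k) ℝ) :
    (NormedSpace.exp M).map Complex.ofReal =
      NormedSpace.exp (M.map Complex.ofReal) := by
  have hcont : Continuous
      (Complex.ofRealHom.mapMatrix : Matrix (Fin k) (Fin k) ℝ →+* Matrix (Fin k) (Fin k) ℂ) := by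
    show Continuous fun M : Matrix (Fin k) (Fin k) ℝ => M.map Complex.ofReal
    exact Continuous.matrix_map continuous_id Complex.continuous_ofReal
  have h1 := open scoped Norms.Operator in map_exp
    (Complex.ofRealHom.mapMatrix : Matrix (Fin k) (Fin k) ℝ →+* Matrix (Fin k) (Fin k) ℂ)
    hcont M
  have h2 : (NormedSpace.exp : Matrix (Fin k) (Fin k) ℂ → Matrix (Fin k) (Fin k) ℂ)
      = NormedSpace.exp := rfl
  exact h1

theorem circleIntegral_add' {E : Type*} [NormedAddCommGroup E] [NormedSpace ℂ E]
    {f g : ℂ → E} {c : ℂ} {r : ℝ} (hf : CircleIntegrable f c r)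
    (hg : CircleIntegrable g c r) :
    (∮ z in C(c, r), (f z + g z)) = (∮ z in C(c, r), f z) + ∮ z in C(c, r), g z := by
  simp only [circleIntegral, smul_add]
  exact intervalIntegral.integral_add hf.out hg.out

end ContourAux

/-- **Contour integral identity, Lemma `contour0`.**
Suppose `A` is a `k × k` real matrix whose eigenvalues all have strictly positive real part,
and `U` is an `n × k` real matrix with orthonormal columns.  Then for any (circular) closed
contour `C(c,r)` lying in the open right half-plane and enclosing all eigenvalues of `A⁻¹`,
`U e^{-A} Uᵀ = (2πi)⁻¹ ∮_{C(c,r)} e^{-1/z} (z I - U A⁻¹ Uᵀ)⁻¹ dz`. -/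
theorem contour_integral_identity {n k : ℕ}
    (A : Matrix (Fin k) (Fin k) ℝ) (U : Matrix (Fin n) (Fin k) ℝ)
    (hA : ∀ μ ∈ spectrum ℂ (A.map Complex.ofReal), 0 < μ.re)
    (hU : Uᵀ * U = 1)
    (c : ℂ) (r : ℝ) (hr : 0 < r)
    (hhalf : ∀ z ∈ Metric.sphere c r, 0 < z.re)
    (hspec : spectrum ℂ ((A.map Complex.ofReal)⁻¹) ⊆ Metric.ball c r) :
    (U * NormedSpace.exp (-A) * Uᵀ).map Complex.ofReal =
      (2 * (Real.pi : ℂ) * Complex.I)⁻¹ •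
        ∮ z in C(c, r),
          Complex.exp (-z⁻¹) •
            (z • (1 : Matrix (Fin n) (Fin n) ℂ) -
              (U * A⁻¹ * Uᵀ).map Complex.ofReal)⁻¹ := by
  have hre : ∀ z ∈ Metric.closedBall c r, 0 < z.re := by
    have hcre : r < c.re := by
      have h1 := hhalf (c - (r : ℂ)) (by simp [Complex.dist_eq, _root_.abs_of_nonneg hr.le])
      simp only [Complex.sub_re, Complex.ofReal_re] at h1
      linarith
    intro z hz
    rw [Metric.mem_closedBall, Complex.dist_eq] at hz
    have h2 : |(z - c).re| ≤ ‖z - c‖ := Complex.abs_re_le_norm _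
    have h3 : c.re - r ≤ z.re := by
      have := abs_le.mp (le_trans h2 hz)
      have h4 : (z - c).re = z.re - c.re := by simp [Complex.sub_re]
      rw [h4] at this
      linarith [this.1]
    linarith
  have h0cb : (0 : ℂ) ∉ Metric.closedBall c r := by
    intro h
    have := hre 0 h
    simp at this
  have hcr : r < ‖c‖ := by
    have hcre : r < c.re := by
      have h1 := hhalf (c - (r : ℂ)) (by simp [Complex.dist_eq, _root_.abs_of_nonneg hr.le])
      simp only [Complex.sub_re, Complex.ofReal_re] at h1
      linarith
    exact lt_of_lt_of_le hcre (Complex.re_le_norm c)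
  set A' : Matrix (Fin k) (Fin k) ℂ := A.map Complex.ofReal with hA'def
  set Uc : Matrix (Fin n) (Fin k) ℂ := U.map Complex.ofReal with hUcdef
  set B : Matrix (Fin k) (Fin k) ℂ := A'⁻¹ with hBdef
  -- A' is invertible
  have hA'unit : IsUnit A' := by
    refine spectrum.isUnit_of_zero_notMem ℂ fun h => ?_
    have := hA 0 h
    simp at this
  have hA'det : IsUnit A'.det := A'.isUnit_iff_isUnit_det.mp hA'unit
  have hBdet : IsUnit B.det := A'.isUnit_nonsing_inv_det hA'det
  have hBinv : B⁻¹ = A' := A'.nonsing_inv_nonsing_inv hA'det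
  -- the complexification of A⁻¹ is B
  have hAdet : IsUnit A.det := by
    have hdet : (Complex.ofRealHom : ℝ →+* ℂ) A.det = A'.det := by
      rw [RingHom.map_det]
      rfl
    rw [isUnit_iff_ne_zero]
    intro h
    rw [h, map_zero] at hdet
    exact hA'det.ne_zero hdet.symm
  have hmm : ∀ {p q s : ℕ} (X : Matrix (Fin p) (Fin q) ℝ) (Y : Matrix (Fin q) (Fin s) ℝ),
      (X * Y).map Complex.ofReal = X.map Complex.ofReal * Y.map Complex.ofReal := by
    intro p q s X Y
    exact Matrix.map_mul (f := Complex.ofRealHom)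
  have hone : ∀ {p : ℕ}, (1 : Matrix (Fin p) (Fin p) ℝ).map Complex.ofReal = 1 :=
    fun {p} => Matrix.map_one _ Complex.ofReal_zero Complex.ofReal_one
  have hmapinv : (A⁻¹).map Complex.ofReal = B := by
    refine (Matrix.inv_eq_left_inv ?_).symm
    rw [hA'def, ← hmm, Matrix.nonsing_inv_mul A hAdet, hone]
  -- orthonormality of the complexified U
  have hUcU : Ucᵀ * Uc = 1 := by
    rw [hUcdef, ← Matrix.transpose_map, ← hmm, hU, hone]
  have hM : (U * A⁻¹ * Uᵀ).map Complex.ofReal = Uc * B * Ucᵀ := by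
    rw [hmm, hmm, hmapinv, Matrix.transpose_map, ← hUcdef]
  -- the resolvent of B is invertible off the ball
  have hunit : ∀ z : ℂ, z ∉ Metric.ball c r →
      IsUnit (z • (1 : Matrix (Fin k) (Fin k) ℂ) - B).det := by
    intro z hz
    have hznotspec : z ∉ spectrum ℂ B := fun h => hz (hspec h)
    have := spectrum.notMem_iff.mp hznotspec
    rw [Algebra.algebraMap_eq_smul_one] at this
    exact (Matrix.isUnit_iff_isUnit_det _).mp this
  have hz0 : ∀ z ∈ Metric.sphere c r, z ≠ 0 := by
    intro z hz h
    exact h0cb (h ▸ Metric.sphere_subset_closedBall hz)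
  have hsph_not_ball : ∀ z ∈ Metric.sphere c r, z ∉ Metric.ball c r := by
    intro z hz hb
    rw [Metric.mem_sphere] at hz
    rw [Metric.mem_ball] at hb
    exact hb.ne hz
  -- the resolvent decomposition
  have hdec : ∀ z ∈ Metric.sphere c r,
      (z • (1 : Matrix (Fin n) (Fin n) ℂ) - Uc * B * Ucᵀ)⁻¹ =
        Uc * (z • (1 : Matrix (Fin k) (Fin k) ℂ) - B)⁻¹ * Ucᵀ +
          z⁻¹ • (1 - Uc * Ucᵀ) := by
    intro z hz
    have hzne := hz0 z hz
    have hSdet := hunit z (hsph_not_ball z hz)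
    set S : Matrix (Fin k) (Fin k) ℂ := z • 1 - B with hSdef
    have hSS : S * S⁻¹ = 1 := Matrix.mul_nonsing_inv _ hSdet
    refine Matrix.inv_eq_right_inv ?_
    have hT1 : (z • (1 : Matrix (Fin n) (Fin n) ℂ) - Uc * B * Ucᵀ) * (Uc * S⁻¹ * Ucᵀ)
        = Uc * Ucᵀ := by
      rw [Matrix.sub_mul]
      have e1 : (z • (1 : Matrix (Fin n) (Fin n) ℂ)) * (Uc * S⁻¹ * Ucᵀ)
          = Uc * ((z • (1 : Matrix (Fin k) (Fin k) ℂ)) * S⁻¹) * Ucᵀ := by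
        simp only [Matrix.smul_mul, Matrix.mul_smul, Matrix.one_mul]
      have e2 : (Uc * B * Ucᵀ) * (Uc * S⁻¹ * Ucᵀ) = Uc * (B * S⁻¹) * Ucᵀ := by
        calc (Uc * B * Ucᵀ) * (Uc * S⁻¹ * Ucᵀ)
            = Uc * B * (Ucᵀ * Uc) * (S⁻¹ * Ucᵀ) := by
              simp only [Matrix.mul_assoc]
          _ = Uc * (B * S⁻¹) * Ucᵀ := by
              rw [hUcU, Matrix.mul_one]
              simp only [Matrix.mul_assoc]
      rw [e1, e2, ← Matrix.sub_mul, ← Matrix.mul_sub, ← Matrix.sub_mul, ← hSdef]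
      rw [hSS, Matrix.mul_one]
    have hT2 : (z • (1 : Matrix (Fin n) (Fin n) ℂ) - Uc * B * Ucᵀ) *
        (z⁻¹ • (1 - Uc * Ucᵀ)) = 1 - Uc * Ucᵀ := by
      rw [Matrix.mul_smul, Matrix.sub_mul]
      have e3 : (Uc * B * Ucᵀ) * (1 - Uc * Ucᵀ) = 0 := by
        rw [Matrix.mul_sub, Matrix.mul_one]
        have : (Uc * B * Ucᵀ) * (Uc * Ucᵀ) = Uc * B * Ucᵀ := by
          calc (Uc * B * Ucᵀ) * (Uc * Ucᵀ) = Uc * B * (Ucᵀ * Uc) * Ucᵀ := by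
                simp only [Matrix.mul_assoc]
            _ = Uc * B * Ucᵀ := by rw [hUcU, Matrix.mul_one]
        rw [this, sub_self]
      rw [e3, sub_zero, Matrix.smul_mul, Matrix.one_mul, smul_smul,
        inv_mul_cancel₀ hzne, one_smul]
    rw [Matrix.mul_add, hT1, hT2]
    abel
  -- continuity facts
  have hcontres : ContinuousOn
      (fun z : ℂ => (z • (1 : Matrix (Fin k) (Fin k) ℂ) - B)⁻¹) (Metric.sphere c r) :=
    fun z hz =>
      ((res_differentiableAt B (hunit z (hsph_not_ball z hz))).continuousAt).continuousWithinAt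
  have hcexp : ∀ z ∈ Metric.sphere c r,
      ContinuousWithinAt (fun z : ℂ => Complex.exp (-z⁻¹)) (Metric.sphere c r) z := by
    intro z hz
    exact (((continuousWithinAt_id.inv₀ (hz0 z hz)).neg).cexp)
  have hint1 : CircleIntegrable
      (fun z : ℂ => Complex.exp (-z⁻¹) • (z • (1 : Matrix (Fin k) (Fin k) ℂ) - B)⁻¹) c r := by
    refine ContinuousOn.circleIntegrable hr.le fun z hz => ?_
    exact (hcexp z hz).smul (hcontres z hz)
  -- the continuous linear map X ↦ Uc * X * Ucᵀ
  let L0 : Matrix (Fin k) (Fin k) ℂ →ₗ[ℂ] Matrix (Fin n) (Fin n) ℂ :=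
    { toFun := fun X => Uc * X * Ucᵀ
      map_add' := fun X Y => by
        show Uc * (X + Y) * Ucᵀ = Uc * X * Ucᵀ + Uc * Y * Ucᵀ
        rw [Matrix.mul_add, Matrix.add_mul]
      map_smul' := fun a X => by
        show Uc * (a • X) * Ucᵀ = a • (Uc * X * Ucᵀ)
        rw [Matrix.mul_smul, Matrix.smul_mul] }
  let L : Matrix (Fin k) (Fin k) ℂ →L[ℂ] Matrix (Fin n) (Fin n) ℂ :=
    LinearMap.toContinuousLinearMap L0
  have hL : ∀ X, L X = Uc * X * Ucᵀ := fun X => rfl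
  -- split the contour integral
  have hsplit : (∮ z in C(c, r),
        Complex.exp (-z⁻¹) • (z • (1 : Matrix (Fin n) (Fin n) ℂ) - Uc * B * Ucᵀ)⁻¹) =
      (∮ z in C(c, r),
        L (Complex.exp (-z⁻¹) • (z • (1 : Matrix (Fin k) (Fin k) ℂ) - B)⁻¹)) +
      ∮ z in C(c, r), (Complex.exp (-z⁻¹) * z⁻¹) • (1 - Uc * Ucᵀ) := by
    rw [← circleIntegral_add' ?h1 ?h2]
    case h1 =>
      refine ContinuousOn.circleIntegrable hr.le fun z hz => ?_
      exact L.continuous.continuousWithinAt.comp ((hcexp z hz).smul (hcontres z hz))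
        (Set.mapsTo_univ _ _)
    case h2 =>
      refine ContinuousOn.circleIntegrable hr.le fun z hz => ?_
      exact ((hcexp z hz).mul (continuousWithinAt_id.inv₀ (hz0 z hz))).smul
        continuousWithinAt_const
    refine circleIntegral.integral_congr hr.le fun z hz => ?_
    rw [hdec z hz, hL, smul_add, smul_smul, Matrix.mul_smul, Matrix.smul_mul]
  -- the second integral vanishes
  have hsecond : (∮ z in C(c, r), (Complex.exp (-z⁻¹) * z⁻¹) • (1 - Uc * Ucᵀ)) = 0 := by
    rw [circleIntegral.integral_smul_const]
    have hzero : (∮ z in C(c, r), Complex.exp (-z⁻¹) * z⁻¹) = 0 := by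
      refine circleIntegral_eq_zero_of_differentiable_on_off_countable hr.le
        Set.countable_empty (fun z hz => ?_) (fun z hz => ?_)
      · have hzne : z ≠ 0 := fun h => h0cb (h ▸ hz)
        exact (((continuousWithinAt_id.inv₀ hzne).neg).cexp).mul
          (continuousWithinAt_id.inv₀ hzne)
      · have hzne : z ≠ 0 := fun h => h0cb (h ▸ Metric.ball_subset_closedBall hz.1)
        exact (((differentiableAt_id.inv hzne).neg).cexp).mul (differentiableAt_id.inv hzne)
    rw [hzero, zero_smul]
  -- the first integral
  have hfirst : (∮ z in C(c, r),
      L (Complex.exp (-z⁻¹) • (z • (1 : Matrix (Fin k) (Fin k) ℂ) - B)⁻¹)) =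
      (2 * Real.pi * Complex.I : ℂ) • (Uc * NormedSpace.exp (-A') * Ucᵀ) := by
    rw [show (∮ z in C(c, r), L (Complex.exp (-z⁻¹) • (z • (1 : Matrix (Fin k) (Fin k) ℂ) - B)⁻¹)) = L (∮ z in C(c, r), Complex.exp (-z⁻¹) • (z • (1 : Matrix (Fin k) (Fin k) ℂ) - B)⁻¹) from clm_circleIntegral L hint1, key_integral B hr hBdet hcr hunit, hBinv]
    rw [L.map_smul, hL]
  -- put everything together
  have hexpmap : (NormedSpace.exp (-A)).map Complex.ofReal = NormedSpace.exp (-A') := by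
    rw [exp_map_ofReal]
    congr 1
    ext i j
    simp [hA'def]
  calc (U * NormedSpace.exp (-A) * Uᵀ).map Complex.ofReal
      = Uc * NormedSpace.exp (-A') * Ucᵀ := by
        rw [hmm, hmm, Matrix.transpose_map, hexpmap, ← hUcdef]
    _ = (2 * (Real.pi : ℂ) * Complex.I)⁻¹ •
          ∮ z in C(c, r), Complex.exp (-z⁻¹) •
            (z • (1 : Matrix (Fin n) (Fin n) ℂ) - (U * A⁻¹ * Uᵀ).map Complex.ofReal)⁻¹ := by
        simp only [hM]
        rw [hsplit, hfirst, hsecond, add_zero, smul_smul,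
          inv_mul_cancel₀ Complex.two_pi_I_ne_zero, one_smul]
end

section
/- Let L be a symmetric positive semidefinite n×n matrix with kernel spanned by a unit vector h, and let V be an n×k matrix with orthonormal columns such that h lies in the column span of V. Then V^T (hh^T) V is the orthogonal projector onto the kernel of V^T L V, and (V^T L V)^+ = (V^T L V + γ V^T hh^T V)^{-1} - γ^{-1} V^T hh^T V for every γ > 0. -/
open Matrix

private lemma mul_vmv' {m n p : Type*} [Fintype n] (A : Matrix m n ℝ) (w : n → ℝ) (v : p → ℝ) :
    A * vecMulVec w v = vecMulVec (A *ᵥ w) v := by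
  ext i j; simp [vecMulVec_apply, mul_apply, mulVec, dotProduct, Finset.sum_mul, mul_assoc]

private lemma vmv_mul' {m n p : Type*} [Fintype n] (w : m → ℝ) (v : n → ℝ) (B : Matrix n p ℝ) :
    vecMulVec w v * B = vecMulVec w (v ᵥ* B) := by
  ext i j; simp [vecMulVec_apply, mul_apply, vecMul, dotProduct, Finset.mul_sum, mul_assoc]

private lemma vmv_mulVec' {m n : Type*} [Fintype n] (w : m → ℝ) (v : n → ℝ) (x : n → ℝ) :
    vecMulVec w v *ᵥ x = (v ⬝ᵥ x) • w := by
  ext i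
  simp [vecMulVec_apply, mulVec, dotProduct, Finset.mul_sum, mul_assoc, mul_comm, mul_left_comm]

private lemma conj_dot' {m n : Type*} [Fintype m] [Fintype n]
    (A : Matrix m m ℝ) (V : Matrix m n ℝ) (x : n → ℝ) :
    (V *ᵥ x) ⬝ᵥ (A *ᵥ (V *ᵥ x)) = x ⬝ᵥ ((Vᵀ * A * V) *ᵥ x) := by
  rw [← mulVec_mulVec, ← mulVec_mulVec, dotProduct_mulVec x, vecMul_transpose]

/-- **Pseudoinverse of the projected Laplacian.**
Let `L` be symmetric positive semidefinite with kernel spanned by a unit vector `h`, and let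
`V` have orthonormal columns with `h` in their span.  Then `P := Vᵀ (h hᵀ) V` is the
orthogonal projector onto the kernel of `S := Vᵀ L V`, and the Moore–Penrose pseudoinverse
`M = S⁺` (characterized by the four Penrose conditions) satisfies
`M = (S + γ P)⁻¹ - γ⁻¹ P` for every `γ > 0`. -/
theorem projected_laplacian_pseudoinverse {n k : ℕ}
    (L : Matrix (Fin n) (Fin n) ℝ) (h : Fin n → ℝ) (V : Matrix (Fin n) (Fin k) ℝ)
    (hL : L.PosSemidef)
    (hker : L *ᵥ h = 0)
    (hunit : ∑ i, (h i) ^ 2 = 1)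
    (hker1 : ∀ x, L *ᵥ x = 0 → ∃ c : ℝ, x = c • h)
    (hV : Vᵀ * V = 1)
    (hspan : ∃ y : Fin k → ℝ, V *ᵥ y = h) :
    letI P : Matrix (Fin k) (Fin k) ℝ := Vᵀ * Matrix.vecMulVec h h * V
    letI S : Matrix (Fin k) (Fin k) ℝ := Vᵀ * L * V
    (P * P = P ∧ Pᵀ = P ∧ ∀ x : Fin k → ℝ, S *ᵥ x = 0 ↔ P *ᵥ x = x) ∧
      ∃ M : Matrix (Fin k) (Fin k) ℝ,
        S * M * S = S ∧ M * S * M = M ∧ (S * M)ᵀ = S * M ∧ (M * S)ᵀ = M * S ∧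
        ∀ γ : ℝ, 0 < γ → M = (S + γ • P)⁻¹ - γ⁻¹ • P := by
  set P : Matrix (Fin k) (Fin k) ℝ := Vᵀ * Matrix.vecMulVec h h * V with hPdef
  set S : Matrix (Fin k) (Fin k) ℝ := Vᵀ * L * V with hSdef
  obtain ⟨y, hy⟩ := hspan
  set g : Fin k → ℝ := Vᵀ *ᵥ h with hg
  have hgy : g = y := by rw [hg, ← hy, mulVec_mulVec, hV, one_mulVec]
  have hVg : V *ᵥ g = h := by rw [hgy, hy]
  have hLsym : Lᵀ = L := by
    have h0 : Lᴴ = L := hL.1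
    rwa [conjTranspose_eq_transpose_of_trivial] at h0
  have hPg : P = vecMulVec g g := by
    rw [hPdef, mul_vmv', vmv_mul', hg, mulVec_transpose]
  have hgg : g ⬝ᵥ g = 1 := by
    have h1 : h ⬝ᵥ (V *ᵥ g) = g ⬝ᵥ g := by
      rw [dotProduct_mulVec, ← mulVec_transpose, ← hg]
    rw [← h1, hVg]
    simpa [dotProduct, sq] using hunit
  have hSsym : Sᵀ = S := by
    rw [hSdef, transpose_mul, transpose_mul, transpose_transpose, hLsym]
    exact (Matrix.mul_assoc _ _ _).symm
  have hSg : S *ᵥ g = 0 := by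
    rw [hSdef, ← mulVec_mulVec, hVg, ← mulVec_mulVec, hker, mulVec_zero]
  have hPP : P * P = P := by
    rw [hPg, mul_vmv', vmv_mulVec', hgg, one_smul]
  have hPsym : Pᵀ = P := by
    rw [hPg]; ext i j; simp [transpose_apply, vecMulVec_apply, mul_comm]
  have hSP : S * P = 0 := by
    rw [hPg, mul_vmv', hSg]
    ext i j; simp [vecMulVec_apply]
  have hPS : P * S = 0 := by
    have h2 := congrArg Matrix.transpose hSP
    rwa [transpose_mul, hPsym, hSsym, transpose_zero] at h2
  have hSpsd : S.PosSemidef := by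
    have h2 := hL.conjTranspose_mul_mul_same V
    rwa [conjTranspose_eq_transpose_of_trivial] at h2
  have hkerIff : ∀ x : Fin k → ℝ, S *ᵥ x = 0 ↔ P *ᵥ x = x := by
    intro x
    constructor
    · intro hx
      have h1 : L *ᵥ (V *ᵥ x) = 0 := by
        apply (hL.dotProduct_mulVec_zero_iff (V *ᵥ x)).mp
        rw [star_trivial, conj_dot', hx, dotProduct_zero]
      obtain ⟨c, hc⟩ := hker1 _ h1
      have hx2 : x = c • g := by
        have h3 : Vᵀ *ᵥ (V *ᵥ x) = x := by rw [mulVec_mulVec, hV, one_mulVec]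
        rw [← h3, hc, mulVec_smul, hg]
      rw [hPg, hx2, mulVec_smul, vmv_mulVec', hgg, one_smul]
    · intro hx
      calc S *ᵥ x = S *ᵥ (P *ᵥ x) := by rw [hx]
        _ = (S * P) *ᵥ x := by rw [mulVec_mulVec]
        _ = 0 := by rw [hSP, zero_mulVec]
  refine ⟨⟨hPP, hPsym, hkerIff⟩, ?_⟩
  -- invertibility of A := S + P
  have hApd : (S + P).PosDef := by
    rw [posDef_iff_dotProduct_mulVec]
    constructor
    · rw [IsHermitian, conjTranspose_eq_transpose_of_trivial, transpose_add, hSsym, hPsym]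
    · intro x hx
      have hq : 0 ≤ x ⬝ᵥ (S *ᵥ x) := by simpa using hSpsd.dotProduct_mulVec_nonneg x
      have hPx : P *ᵥ x = (g ⬝ᵥ x) • g := by rw [hPg, vmv_mulVec']
      have hr : x ⬝ᵥ (P *ᵥ x) = (g ⬝ᵥ x) ^ 2 := by
        rw [hPx, dotProduct_smul, dotProduct_comm, sq, smul_eq_mul]
      have hr0 : 0 ≤ x ⬝ᵥ (P *ᵥ x) := by rw [hr]; positivity
      rw [star_trivial, add_mulVec, dotProduct_add]
      rcases lt_or_eq_of_le hq with hq' | hq'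
      · linarith
      rcases lt_or_eq_of_le hr0 with hr' | hr'
      · linarith
      exfalso
      have hSx : S *ᵥ x = 0 := by
        apply (hSpsd.dotProduct_mulVec_zero_iff x).mp
        rw [star_trivial, ← hq']
      have hgx : g ⬝ᵥ x = 0 := by
        have h6 : (g ⬝ᵥ x) ^ 2 = 0 := by rw [← hr, ← hr']
        exact pow_eq_zero_iff (two_ne_zero) |>.mp h6
      have := (hkerIff x).mp hSx
      rw [hPx, hgx, zero_smul] at this
      exact hx this.symm
  have hAdet : IsUnit (S + P).det := (Matrix.isUnit_iff_isUnit_det _).mp hApd.isUnit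
  set N : Matrix (Fin k) (Fin k) ℝ := (S + P)⁻¹ with hN
  have hAN : (S + P) * N = 1 := Matrix.mul_nonsing_inv _ hAdet
  have hNA : N * (S + P) = 1 := Matrix.nonsing_inv_mul _ hAdet
  have hPA : P * (S + P) = P := by rw [mul_add, hPS, hPP, zero_add]
  have hAP : (S + P) * P = P := by rw [add_mul, hSP, hPP, zero_add]
  have hPN : P * N = P := by
    calc P * N = (P * (S + P)) * N := by rw [hPA]
      _ = P * ((S + P) * N) := by rw [mul_assoc]
      _ = P := by rw [hAN, mul_one]
  have hNP : N * P = P := by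
    calc N * P = N * ((S + P) * P) := by rw [hAP]
      _ = (N * (S + P)) * P := by rw [mul_assoc]
      _ = P := by rw [hNA, one_mul]
  have hSN : S * N = 1 - P := by
    have h4 : S = (S + P) - P := by abel
    rw [h4, sub_mul, hAN, hPN]
  have hNS : N * S = 1 - P := by
    have h4 : S = (S + P) - P := by abel
    rw [h4, mul_sub, hNA, hNP]
  refine ⟨N - P, ?_, ?_, ?_, ?_, ?_⟩
  · rw [mul_sub, hSN, hSP, sub_zero, sub_mul, one_mul, hPS, sub_zero]
  · rw [sub_mul, hNS, hPS, sub_zero, sub_mul, one_mul, mul_sub, hPN, hPP, sub_self, sub_zero]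
  · rw [mul_sub, hSN, hSP, sub_zero, transpose_sub, transpose_one, hPsym]
  · rw [sub_mul, hNS, hPS, sub_zero, transpose_sub, transpose_one, hPsym]
  · intro γ hγ
    have hγ0 : γ ≠ 0 := ne_of_gt hγ
    have key : (S + γ • P) * (N + (γ⁻¹ - 1) • P) = 1 := by
      rw [add_mul, mul_add, mul_add, hSN, mul_smul_comm, hSP, smul_zero, add_zero,
        smul_mul_assoc, hPN, smul_mul_assoc, mul_smul_comm, hPP, smul_smul]
      have h5 : γ * (γ⁻¹ - 1) = 1 - γ := by field_simp
      rw [h5, sub_smul, one_smul]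
      abel
    rw [Matrix.inv_eq_right_inv key, sub_smul, one_smul]
    abel
end
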